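/- arXiv:1811.06275 — 3 statements merged into one kernel-verified Lean document; each statement's English description precedes it below -/
import Mathlib

section
/- Let N ∈ ℕ, let f₁,…,f_N : [0,1] → [0,1] and g₁,…,g_N : [0,1] → ℝ be Lebesgue measurable functions satisfying hypotheses (H₁), (H₂) with constant K, and (H₃), and let L be the largest m ∈ {1,…,N} such that some intersection f_{n₁}([0,1]) ∩ ⋯ ∩ f_{n_m}([0,1]) with n₁ < ⋯ < n_m has positive Lebesgue measure. If |g_n(x)| < (1/(KL)) |f_n'(x)| for all n ∈ {1,…,N} and almost all x ∈ [0,1], then Σ_{n=1}^N ∫_{[0,1]} |g_n(x)| dx < 1. -/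
open MeasureTheory Filter Set Topology
open scoped Classical

noncomputable abbrev μ01 : MeasureTheory.Measure ℝ := MeasureTheory.volume.restrict (Set.Icc 0 1)

/-- `x` is a Lebesgue density point of the set `S ⊆ ℝ`. -/
def DensityPt (S : Set ℝ) (x : ℝ) : Prop :=
  Tendsto (fun r : ℝ =>
      MeasureTheory.volume (S ∩ Metric.closedBall x r) / MeasureTheory.volume (Metric.closedBall x r))
    (𝓝[>] 0) (𝓝 1)

/-- `h` has the linear map `t ↦ a * t` as approximate differential at `x₀` (relative to `E`). -/
def HasApproxDerivAt (E : Set ℝ) (h : ℝ → ℝ) (a : ℝ) (x₀ : ℝ) : Prop :=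
  ∀ ε > 0, DensityPt {x | x ∈ E ∧ x ≠ x₀ ∧ |h x - h x₀ - a * (x - x₀)| / |x - x₀| < ε} x₀

noncomputable def approxDeriv (E : Set ℝ) (h : ℝ → ℝ) (x : ℝ) : ℝ :=
  if hd : ∃ a, HasApproxDerivAt E h a x then hd.choose else 0

open scoped ENNReal NNReal

namespace Stmt10Aux

def goodSet (f : ℝ → ℝ) (a x ε : ℝ) : Set ℝ :=
  {y | y ∈ Icc (0:ℝ) 1 ∧ y ≠ x ∧ |f y - f x - a * (y - x)| / |y - x| < ε}

lemma hasApproxDerivAt_densityPt {f : ℝ → ℝ} {a x : ℝ}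
    (h : HasApproxDerivAt (Icc 0 1) f a x) {ε : ℝ} (hε : 0 < ε) :
    DensityPt (goodSet f a x ε) x := h ε hε

lemma goodSet_measurable {f : ℝ → ℝ} (hf : Measurable f) (a x ε : ℝ) :
    MeasurableSet (goodSet f a x ε) := by
  have hm : Measurable fun y => |f y - f x - a * (y - x)| / |y - x| :=
    ((hf.sub_const (f x)).sub ((measurable_id.sub_const x).const_mul a)).abs.div
      (measurable_id.sub_const x).abs
  have : goodSet f a x ε =
      (Icc (0:ℝ) 1 ∩ {x}ᶜ) ∩ {y | |f y - f x - a * (y - x)| / |y - x| < ε} := by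
    ext y; simp [goodSet, and_assoc]
  rw [this]
  exact ((measurableSet_Icc.inter (measurableSet_singleton x).compl).inter
    (measurableSet_lt hm measurable_const))

lemma mem_goodSet_est {f : ℝ → ℝ} {a x ε : ℝ} {z : ℝ} (hz : z ∈ goodSet f a x ε) :
    z ∈ Icc (0:ℝ) 1 ∧ z ≠ x ∧ |f z - f x - a * (z - x)| < ε * |z - x| := by
  obtain ⟨h1, h2, h3⟩ := hz
  refine ⟨h1, h2, ?_⟩
  have hzx : 0 < |z - x| := abs_pos.mpr (sub_ne_zero.mpr h2)
  calc |f z - f x - a * (z - x)| = |f z - f x - a * (z - x)| / |z - x| * |z - x| := by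
        field_simp
    _ < ε * |z - x| := by exact mul_lt_mul_of_pos_right h3 hzx

lemma exists_point {S T B : Set ℝ} {u v : ℝ≥0∞}
    (h1 : volume (B \ S) ≤ u) (h2 : volume (B \ T) ≤ v)
    (h : u + v < volume B) : ∃ z ∈ B, z ∈ S ∧ z ∈ T := by
  by_contra hc
  push_neg at hc
  have hsub : B ⊆ (B \ S) ∪ (B \ T) := by
    intro z hz
    by_cases hzS : z ∈ S
    · exact Or.inr ⟨hz, fun hzT => hc z hz hzS hzT⟩
    · exact Or.inl ⟨hz, hzS⟩
  have h3 := (measure_mono hsub).trans (measure_union_le (μ := volume) _ _)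
  exact absurd (h3.trans (add_le_add h1 h2)) (not_le.mpr h)

lemma densityPt_quant {S : Set ℝ} {x : ℝ} (hS : MeasurableSet S) (hd : DensityPt S x)
    {η : ℝ} (hη : 0 < η) (hη1 : η ≤ 1) :
    ∀ᶠ r in 𝓝[>] (0:ℝ),
      volume (Metric.closedBall x r \ S) ≤ ENNReal.ofReal (η * (2 * r)) := by
  set c : ℝ≥0∞ := ENNReal.ofReal (1 - η) with hcdef
  have hc : c < 1 := by
    rw [hcdef]; exact ENNReal.ofReal_lt_one.mpr (by linarith)
  filter_upwards [hd.eventually (eventually_gt_nhds hc), self_mem_nhdsWithin] with r hr hr0'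
  have hr0 : (0:ℝ) < r := hr0'
  set B := Metric.closedBall x r with hB
  have hBvol : volume B = ENNReal.ofReal (2 * r) := Real.volume_closedBall x r
  have hB0 : volume B ≠ 0 := by
    rw [hBvol]; simp only [ne_eq, ENNReal.ofReal_eq_zero, not_le]; linarith
  have hBt : volume B ≠ ∞ := by rw [hBvol]; exact ENNReal.ofReal_ne_top
  have h1 : c * volume B ≤ volume (S ∩ B) := by
    have := mul_le_mul_left hr.le (volume B)
    rwa [ENNReal.div_mul_cancel hB0 hBt] at this
  have hpart : volume (B ∩ S) + volume (B \ S) = volume B := measure_inter_add_diff B hS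
  have h2 : volume (B \ S) + c * volume B ≤ volume B := by
    calc volume (B \ S) + c * volume B ≤ volume (B \ S) + volume (B ∩ S) := by
          gcongr; rwa [Set.inter_comm] at h1
      _ = volume B := by rw [add_comm]; exact hpart
  have h4 := tsub_le_tsub_right h2 (c * volume B)
  rw [ENNReal.add_sub_cancel_right (ENNReal.mul_ne_top hc.ne_top hBt)] at h4
  calc volume (B \ S) ≤ volume B - c * volume B := h4
    _ = (1 - c) * volume B := by
        have hsm : (1 - c) * volume B = 1 * volume B - c * volume B :=
          ENNReal.sub_mul (fun _ _ => hBt)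
        rw [hsm, one_mul]
    _ = ENNReal.ofReal (η * (2 * r)) := by
        rw [hcdef, hBvol, ← ENNReal.ofReal_one, ← ENNReal.ofReal_sub _ (by linarith),
          ← ENNReal.ofReal_mul (by linarith)]
        norm_num

lemma approx_unique {f : ℝ → ℝ} (hf : Measurable f) {a b x : ℝ}
    (ha : HasApproxDerivAt (Icc 0 1) f a x) (hb : HasApproxDerivAt (Icc 0 1) f b x) :
    a = b := by
  have key : ∀ ε > (0:ℝ), |a - b| ≤ 2 * ε := by
    intro ε hε
    have hda := densityPt_quant (goodSet_measurable hf a x ε) (ha ε hε)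
      (η := 1/4) (by norm_num) (by norm_num)
    have hdb := densityPt_quant (goodSet_measurable hf b x ε) (hb ε hε)
      (η := 1/4) (by norm_num) (by norm_num)
    obtain ⟨r, h1, h2, h3⟩ := (hda.and (hdb.and self_mem_nhdsWithin)).exists
    have hr0 : (0:ℝ) < r := h3
    obtain ⟨z, hzB, hza, hzb⟩ := exists_point h1 h2 (by
      rw [Real.volume_closedBall, ← ENNReal.ofReal_add (by linarith) (by linarith)]
      exact ENNReal.ofReal_lt_ofReal_iff_of_nonneg (by linarith) |>.mpr (by linarith))
    obtain ⟨_, hzx, hza'⟩ := mem_goodSet_est hza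
    obtain ⟨_, _, hzb'⟩ := mem_goodSet_est hzb
    have hd0 : 0 < |z - x| := abs_pos.mpr (sub_ne_zero.mpr hzx)
    have habs : |a - b| * |z - x| < 2 * ε * |z - x| := by
      calc |a - b| * |z - x| = |(f z - f x - b * (z - x)) - (f z - f x - a * (z - x))| := by
            rw [← abs_mul]; ring_nf
      _ ≤ |f z - f x - b * (z - x)| + |f z - f x - a * (z - x)| := abs_sub _ _
      _ < ε * |z - x| + ε * |z - x| := by exact add_lt_add hzb' hza'
      _ = 2 * ε * |z - x| := by ring
    nlinarith [mul_lt_mul_of_pos_right habs (inv_pos.mpr hd0)]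
  by_contra hab
  have h0 : 0 < |a - b| := abs_pos.mpr (sub_ne_zero.mpr hab)
  have := key (|a - b| / 4) (by positivity)
  linarith

lemma approxDeriv_eq {f : ℝ → ℝ} (hf : Measurable f) {a x : ℝ}
    (ha : HasApproxDerivAt (Icc 0 1) f a x) : approxDeriv (Icc 0 1) f x = a := by
  have hex : ∃ a, HasApproxDerivAt (Icc 0 1) f a x := ⟨a, ha⟩
  rw [approxDeriv, dif_pos hex]
  exact approx_unique hf hex.choose_spec ha

def Gq (f : ℝ → ℝ) (q τ x : ℝ) : Set ℝ :=
  {y | y ∈ Icc (0:ℝ) 1 ∧ |f y - f x - q * (y - x)| ≤ τ * |y - x|}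

def Pset (f : ℝ → ℝ) (q τ : ℝ) (k : ℕ) : Set ℝ :=
  {x | x ∈ Icc (0:ℝ) 1 ∧ ∀ r : ℝ, 0 < r → r ≤ 1 / k →
    volume (Metric.closedBall x r \ Gq f q τ x) ≤ ENNReal.ofReal (r / 8)}

lemma Pset_subset_Icc {f : ℝ → ℝ} {q τ : ℝ} {k : ℕ} : Pset f q τ k ⊆ Icc (0:ℝ) 1 :=
  fun _ hx => hx.1

lemma Pset_measurable {f : ℝ → ℝ} (hf : Measurable f) (q τ : ℝ) (k : ℕ) :
    MeasurableSet (Pset f q τ k) := by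
  have hsec : ∀ ρ : ℝ, Measurable fun x => volume (Metric.closedBall x ρ \ Gq f q τ x) := by
    intro ρ
    have hS : MeasurableSet {p : ℝ × ℝ | dist p.2 p.1 ≤ ρ ∧ ¬(p.2 ∈ Icc (0:ℝ) 1 ∧
        |f p.2 - f p.1 - q * (p.2 - p.1)| ≤ τ * |p.2 - p.1|)} := by
      apply MeasurableSet.inter
      · exact measurableSet_le (measurable_snd.dist measurable_fst) measurable_const
      · apply MeasurableSet.compl
        apply MeasurableSet.inter
        · exact measurable_snd measurableSet_Icc
        · exact measurableSet_le
            (((hf.comp measurable_snd).sub (hf.comp measurable_fst)).sub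
              ((measurable_snd.sub measurable_fst).const_mul q)).abs
            ((measurable_snd.sub measurable_fst).abs.const_mul τ)
    have := measurable_measure_prodMk_left (ν := (volume : Measure ℝ)) hS
    convert this using 2 with x
    rfl
  have heq : Pset f q τ k = Icc (0:ℝ) 1 ∩ ⋂ (ρ : ℚ), ⋂ (_ : 0 < (ρ:ℝ) ∧ (ρ:ℝ) ≤ 1 / k),
      {x | volume (Metric.closedBall x ρ \ Gq f q τ x) ≤ ENNReal.ofReal (ρ / 8)} := by
    ext x
    simp only [Pset, Set.mem_setOf_eq, Set.mem_inter_iff, Set.mem_iInter]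
    constructor
    · rintro ⟨hxI, h⟩
      exact ⟨hxI, fun ρ hρ => h ρ hρ.1 hρ.2⟩
    · rintro ⟨hxI, h⟩
      refine ⟨hxI, fun r hr0 hrk => ?_⟩
      apply ENNReal.le_of_forall_pos_le_add
      intro δ hδ _
      rcases eq_or_lt_of_le hrk with hre | hrlt
      · -- r = 1/k
        have hk0 : (k:ℝ) ≠ 0 := by
          intro h0; rw [h0] at hre; simp at hre; linarith
        have hcast : ((((k:ℚ))⁻¹ : ℚ) : ℝ) = 1 / (k:ℝ) := by push_cast; ring
        have hh := h ((k:ℚ))⁻¹ (by rw [hcast, ← hre]; exact ⟨hr0, le_refl _⟩)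
        rw [hcast, ← hre] at hh
        exact hh.trans (le_add_right (le_refl _))
      · -- r < 1/k
        have hδ' : (0:ℝ) < (δ:ℝ) := hδ
        obtain ⟨ρ, hρ1, hρ2⟩ := exists_rat_btwn (lt_min hrlt (by linarith : r < r + 8 * (δ:ℝ)))
        have hρk := (hρ2.trans_le (min_le_left _ _))
        have hρr := hρ2.trans_le (min_le_right _ _)
        have hmono : volume (Metric.closedBall x r \ Gq f q τ x) ≤
            volume (Metric.closedBall x ρ \ Gq f q τ x) := by
          apply measure_mono
          exact Set.diff_subset_diff_left (Metric.closedBall_subset_closedBall hρ1.le)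
        have hh := h ρ ⟨by linarith, hρk.le⟩
        refine hmono.trans (hh.trans ?_)
        have : ENNReal.ofReal ((ρ:ℝ) / 8) ≤ ENNReal.ofReal (r / 8 + (δ:ℝ)) := by
          apply ENNReal.ofReal_le_ofReal; linarith
        refine this.trans ?_
        rw [ENNReal.ofReal_add (by linarith) hδ'.le, ENNReal.ofReal_coe_nnreal]
  rw [heq]
  apply measurableSet_Icc.inter
  apply MeasurableSet.iInter
  intro ρ
  apply MeasurableSet.iInter
  intro _
  exact measurableSet_le (hsec ρ) measurable_const

lemma slope_capture {f : ℝ → ℝ} (hf : Measurable f) {q τ : ℝ} {k : ℕ} (hk : 1 ≤ k)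
    {x a : ℝ} (hx : x ∈ Pset f q τ k) (ha : HasApproxDerivAt (Icc 0 1) f a x) :
    |a - q| ≤ τ := by
  have key : ∀ ε' > (0:ℝ), |a - q| ≤ τ + ε' := by
    intro ε' hε'
    have hk0 : (0:ℝ) < 1 / k := by
      apply div_pos one_pos; exact_mod_cast Nat.pos_of_ne_zero (by omega)
    have hquant := densityPt_quant (goodSet_measurable hf a x ε') (ha ε' hε')
      (η := 1/4) (by norm_num) (by norm_num)
    have hmem : Set.Ioo (0:ℝ) (1/k) ∈ 𝓝[>] (0:ℝ) := Ioo_mem_nhdsGT hk0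
    obtain ⟨r, hq1, hq2⟩ := (hquant.and (eventually_of_mem hmem (fun r hr => hr))).exists
    obtain ⟨hr0, hrk⟩ := hq2
    have hG := hx.2 r hr0 hrk.le
    obtain ⟨z, hzB, hzG, hzS⟩ := exists_point hG (by simpa using hq1 : volume
        (Metric.closedBall x r \ goodSet f a x ε') ≤ ENNReal.ofReal (1/4 * (2*r))) (by
      rw [Real.volume_closedBall, ← ENNReal.ofReal_add (by linarith) (by linarith)]
      exact (ENNReal.ofReal_lt_ofReal_iff_of_nonneg (by linarith)).mpr (by linarith))
    obtain ⟨_, hzx, hza⟩ := mem_goodSet_est hzS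
    have hzq := hzG.2
    have hd0 : 0 < |z - x| := abs_pos.mpr (sub_ne_zero.mpr hzx)
    have hest : |a - q| * |z - x| ≤ (τ + ε') * |z - x| := by
      calc |a - q| * |z - x| = |(f z - f x - q * (z - x)) - (f z - f x - a * (z - x))| := by
            rw [← abs_mul]; ring_nf
        _ ≤ |f z - f x - q * (z - x)| + |f z - f x - a * (z - x)| := abs_sub _ _
        _ ≤ τ * |z - x| + ε' * |z - x| := add_le_add hzq hza.le
        _ = (τ + ε') * |z - x| := by ring
    exact le_of_mul_le_mul_right hest hd0
  by_contra hq
  have := key ((|a - q| - τ) / 2) (by linarith [not_le.mp hq])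
  linarith [not_le.mp hq]

lemma pset_est {f : ℝ → ℝ} {q τ : ℝ} (hτ : 0 ≤ τ) {k : ℕ} (hk : 1 ≤ k) {x y : ℝ}
    (hx : x ∈ Pset f q τ k) (hy : y ∈ Pset f q τ k) (hxy : |y - x| ≤ 1 / (2 * k)) :
    |f y - f x - q * (y - x)| ≤ 3 * τ * |y - x| := by
  rcases eq_or_ne y x with rfl | hne
  · simp
  have hr0 : (0:ℝ) < |y - x| := abs_pos.mpr (sub_ne_zero.mpr hne)
  set r := |y - x| with hrdef
  have hkpos : (0:ℝ) < (k:ℝ) := by exact_mod_cast Nat.pos_of_ne_zero (by omega)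
  have hrk : r ≤ 1 / k := by
    refine hxy.trans ?_
    rw [div_le_div_iff₀ (by positivity) (by positivity)]; linarith
  have h2rk : 2 * r ≤ 1 / k := by
    have : r ≤ 1 / (2*k) := hxy
    rw [le_div_iff₀ (by positivity)] at this ⊢; linarith
  have hGx := hx.2 r hr0 hrk
  have hGy := hy.2 (2*r) (by linarith) h2rk
  have hsub : Metric.closedBall x r \ Gq f q τ y ⊆ Metric.closedBall y (2*r) \ Gq f q τ y := by
    apply Set.diff_subset_diff_left
    intro z hz
    rw [Metric.mem_closedBall] at hz ⊢
    have : dist z y ≤ dist z x + dist x y := dist_triangle z x y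
    have hxyd : dist x y = r := by rw [Real.dist_eq, ← abs_neg]; congr 1; ring
    linarith
  have hGy' : volume (Metric.closedBall x r \ Gq f q τ y) ≤ ENNReal.ofReal (2*r/8) :=
    (measure_mono hsub).trans hGy
  obtain ⟨z, hzB, hzx, hzy⟩ := exists_point hGx hGy' (by
    rw [Real.volume_closedBall, ← ENNReal.ofReal_add (by linarith) (by linarith)]
    exact (ENNReal.ofReal_lt_ofReal_iff_of_nonneg (by linarith)).mpr (by linarith))
  have hzxd : |z - x| ≤ r := by
    rw [Metric.mem_closedBall, Real.dist_eq] at hzB; exact hzB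
  have hzyd : |z - y| ≤ 2*r := by
    have : |z - y| ≤ |z - x| + |x - y| := by
      calc |z - y| = |(z - x) + (x - y)| := by ring_nf
        _ ≤ |z - x| + |x - y| := abs_add_le _ _
    have hxy' : |x - y| = r := by rw [← abs_neg]; congr 1; ring
    linarith
  have h1 : |f z - f x - q * (z - x)| ≤ τ * r := hzx.2.trans (by
    have := mul_le_mul_of_nonneg_left hzxd hτ; linarith)
  have h2 : |f z - f y - q * (z - y)| ≤ τ * (2*r) := hzy.2.trans (by
    have := mul_le_mul_of_nonneg_left hzyd hτ; linarith)
  calc |f y - f x - q * (y - x)|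
      = |(f z - f x - q * (z - x)) - (f z - f y - q * (z - y))| := by ring_nf
    _ ≤ |f z - f x - q * (z - x)| + |f z - f y - q * (z - y)| := abs_sub _ _
    _ ≤ τ * r + τ * (2*r) := add_le_add h1 h2
    _ = 3 * τ * |y - x| := by rw [← hrdef]; ring

lemma image_lower {f : ℝ → ℝ} {c : ℝ} (hc : 0 < c) {S : Set ℝ}
    (hbil : ∀ x ∈ S, ∀ y ∈ S, c * |y - x| ≤ |f y - f x|) :
    ENNReal.ofReal c * volume S ≤ volume (f '' S) := by
  have hinj : Set.InjOn f S := by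
    intro u hu v hv huv
    have h1 := hbil u hu v hv
    rw [huv, sub_self, abs_zero] at h1
    have h2 : |v - u| = 0 := by nlinarith [abs_nonneg (v - u)]
    have h3 := abs_eq_zero.mp h2
    linarith [h3]
  set g := Function.invFunOn f S with hg
  have hleft : Set.LeftInvOn g f S := hinj.leftInvOn_invFunOn
  have hglip : LipschitzOnWith (Real.toNNReal c⁻¹) g (f '' S) := by
    apply LipschitzOnWith.of_dist_le_mul
    rintro u ⟨p, hp, rfl⟩ v ⟨w, hw, rfl⟩
    rw [hleft hp, hleft hw, Real.dist_eq, Real.dist_eq,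
      Real.coe_toNNReal _ (by positivity)]
    have hb := hbil w hw p hp
    have h3 := mul_le_mul_of_nonneg_left hb (le_of_lt (inv_pos.mpr hc))
    calc |p - w| = c⁻¹ * (c * |p - w|) := by field_simp
      _ ≤ c⁻¹ * |f p - f w| := h3
  have himg : g '' (f '' S) = S := hleft.image_image
  have h1 := hglip.hausdorffMeasure_image_le (by norm_num : (0:ℝ) ≤ 1)
  rw [himg, ENNReal.rpow_one, MeasureTheory.hausdorffMeasure_real] at h1
  have hco : ((Real.toNNReal c⁻¹ : ℝ≥0) : ℝ≥0∞) = ENNReal.ofReal c⁻¹ := rfl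
  rw [hco] at h1
  calc ENNReal.ofReal c * volume S
      ≤ ENNReal.ofReal c * (ENNReal.ofReal c⁻¹ * volume (f '' S)) := mul_le_mul_right h1 _
    _ = (ENNReal.ofReal c * ENNReal.ofReal c⁻¹) * volume (f '' S) := (mul_assoc _ _ _).symm
    _ = volume (f '' S) := by
        rw [← ENNReal.ofReal_mul hc.le, mul_inv_cancel₀ hc.ne', ENNReal.ofReal_one, one_mul]

lemma coverage {f : ℝ → ℝ} (hf : Measurable f) {ε : ℝ} (hε : 0 < ε) {x a : ℝ}
    (hxI : x ∈ Icc (0:ℝ) 1) (ha : HasApproxDerivAt (Icc 0 1) f a x) (ha0 : a ≠ 0) :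
    ∃ q : ℚ, (q:ℝ) ≠ 0 ∧ |a - (q:ℝ)| ≤ ε * |(q:ℝ)| / 2 ∧ ∃ k : ℕ, 1 ≤ k ∧
      x ∈ Pset f q (ε * |(q:ℝ)|) k := by
  have hapos : 0 < |a| := abs_pos.mpr ha0
  obtain ⟨q, hq⟩ := exists_rat_near a (show (0:ℝ) < min (ε * |a| / 4) (|a| / 2) by positivity)
  have hq1 : |a - q| < ε * |a| / 4 := hq.trans_le (min_le_left _ _)
  have hq2 : |a - q| < |a| / 2 := hq.trans_le (min_le_right _ _)
  have hqlb : |a| / 2 ≤ |(q:ℝ)| := by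
    have := abs_sub_abs_le_abs_sub a (q:ℝ)
    linarith
  have hq0 : (q:ℝ) ≠ 0 := by
    intro h0; rw [h0, abs_zero] at hqlb; linarith
  have hqa : |a - q| ≤ ε * |(q:ℝ)| / 2 := by nlinarith
  refine ⟨q, hq0, hqa, ?_⟩
  set τ := ε * |(q:ℝ)| with hτdef
  have hτpos : 0 < τ := by positivity
  set S := goodSet f a x (τ/2) with hSdef
  have hsub : S ⊆ Gq f (q:ℝ) τ x := by
    rintro y hy
    obtain ⟨hyI, hyx, hyest⟩ := mem_goodSet_est hy
    refine ⟨hyI, ?_⟩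
    calc |f y - f x - q * (y - x)|
        = |(f y - f x - a * (y - x)) + (a - q) * (y - x)| := by ring_nf
      _ ≤ |f y - f x - a * (y - x)| + |a - q| * |y - x| := by
          rw [← abs_mul]; exact abs_add_le _ _
      _ ≤ τ/2 * |y - x| + τ/2 * |y - x| := by
          refine add_le_add hyest.le ?_
          apply mul_le_mul_of_nonneg_right _ (abs_nonneg _)
          rw [hτdef]; linarith
      _ = τ * |y - x| := by ring
  have hquant := densityPt_quant (goodSet_measurable hf a x (τ/2)) (ha (τ/2) (by positivity))
    (η := 1/16) (by norm_num) (by norm_num)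
  rw [eventually_nhdsWithin_iff, Metric.eventually_nhds_iff] at hquant
  obtain ⟨δ, hδ0, hδ⟩ := hquant
  obtain ⟨n, hn⟩ := exists_nat_one_div_lt hδ0
  refine ⟨n + 1, le_add_self, hxI, fun r hr0 hrk => ?_⟩
  have hrδ : r < δ := by
    have : (1:ℝ) / ((n:ℝ) + 1) < δ := hn
    have hcast : ((n+1 : ℕ) : ℝ) = (n:ℝ) + 1 := by push_cast; ring
    rw [hcast] at hrk
    linarith
  have hball := hδ (show dist r 0 < δ by rw [Real.dist_eq, sub_zero, abs_of_pos hr0]; exact hrδ)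
    hr0
  calc volume (Metric.closedBall x r \ Gq f (q:ℝ) τ x)
      ≤ volume (Metric.closedBall x r \ S) := measure_mono (Set.diff_subset_diff_right hsub)
    _ ≤ ENNReal.ofReal (1/16 * (2*r)) := hball
    _ = ENNReal.ofReal (r/8) := by rw [show (1:ℝ)/16 * (2*r) = r/8 by ring]

lemma pieces {f : ℝ → ℝ} (hf : Measurable f) {ε : ℝ} (hε1 : 0 < ε) (hε2 : ε ≤ 1/12) :
    ∃ (E : ℕ → Set ℝ) (qv : ℕ → ℝ),
      (∀ n, MeasurableSet (E n)) ∧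
      (Pairwise (Function.onFun Disjoint E)) ∧
      (∀ n, E n ⊆ Icc (0:ℝ) 1) ∧
      (∀ n, ∀ x ∈ E n, ∀ a, HasApproxDerivAt (Icc 0 1) f a x → |a - qv n| ≤ ε * |qv n|) ∧
      (∀ n, ENNReal.ofReal ((1 - 3*ε) * |qv n|) * volume (E n) ≤ volume (f '' E n)) ∧
      (∀ n, Set.InjOn f (E n)) ∧
      (∀ x ∈ Icc (0:ℝ) 1, ∀ a, HasApproxDerivAt (Icc 0 1) f a x → a ≠ 0 → x ∈ ⋃ n, E n) := by
  classical
  set e : ℕ → ℚ × ℕ × ℤ := fun n => (Denumerable.eqv (ℚ × ℕ × ℤ)).symm n with he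
  set R : ℚ × ℕ × ℤ → Set ℝ := fun p =>
    if (p.1:ℝ) ≠ 0 ∧ 1 ≤ p.2.1 then
      Pset f p.1 (ε * |(p.1:ℝ)|) p.2.1 ∩
        Ico ((p.2.2:ℝ)/(2*p.2.1)) (((p.2.2:ℝ)+1)/(2*p.2.1)) else ∅ with hR
  set E := disjointed (fun n => R (e n)) with hE
  have hEsub : ∀ n, E n ⊆ R (e n) := fun n => disjointed_subset _ n
  -- bilipschitz estimate on nonempty pieces
  have hbil : ∀ p : ℚ × ℕ × ℤ, (p.1:ℝ) ≠ 0 → 1 ≤ p.2.1 →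
      ∀ x ∈ R p, ∀ y ∈ R p, ((1 - 3*ε) * |(p.1:ℝ)|) * |y - x| ≤ |f y - f x| := by
    rintro ⟨q, k, j⟩ hq0 hk x hx y hy
    have hcond : (q:ℝ) ≠ 0 ∧ 1 ≤ k := ⟨hq0, hk⟩
    simp only [hR] at hx hy
    rw [if_pos hcond] at hx hy
    have hkpos : (0:ℝ) < (k:ℝ) := by exact_mod_cast hk
    have hxy : |y - x| ≤ 1 / (2*(k:ℝ)) := by
      obtain ⟨_, hx2⟩ := hx
      obtain ⟨_, hy2⟩ := hy
      simp only [Set.mem_Ico] at hx2 hy2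
      have h2k : (0:ℝ) < 2*(k:ℝ) := by linarith
      have hdiff : ((j:ℝ)+1)/(2*(k:ℝ)) - (j:ℝ)/(2*(k:ℝ)) = 1/(2*(k:ℝ)) := by
        field_simp
        ring
      rw [abs_le]
      constructor
      · linarith [hx2.1, hx2.2, hy2.1, hy2.2]
      · linarith [hx2.1, hx2.2, hy2.1, hy2.2]
    have hest := pset_est (by positivity : (0:ℝ) ≤ ε * |(q:ℝ)|) hk hx.1 hy.1 (by exact_mod_cast hxy)
    have habs : |(q:ℝ)| * |y - x| - 3*(ε * |(q:ℝ)|) * |y - x| ≤ |f y - f x| := by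
      have h1 : |(q:ℝ) * (y - x)| - |f y - f x - q * (y - x)| ≤ |f y - f x| := by
        have := abs_sub_abs_le_abs_sub ((q:ℝ) * (y - x)) ((q:ℝ) * (y - x) - (f y - f x))
        have h2 : |(q:ℝ) * (y-x) - ((q:ℝ)*(y-x) - (f y - f x))| = |f y - f x| := by
          congr 1; ring
        have h3 : |(q:ℝ)*(y-x) - (f y - f x)| = |f y - f x - q*(y-x)| := by
          rw [← abs_neg]; congr 1; ring
        rw [h2, h3] at this
        linarith
      rw [abs_mul] at h1
      linarith
    calc ((1 - 3*ε) * |(q:ℝ)|) * |y - x|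
        = |(q:ℝ)| * |y - x| - 3*(ε * |(q:ℝ)|) * |y - x| := by ring
      _ ≤ |f y - f x| := habs
  have hRmeas : ∀ p, MeasurableSet (R p) := by
    intro p
    simp only [hR]
    split_ifs with h
    · exact (Pset_measurable hf _ _ _).inter measurableSet_Ico
    · exact MeasurableSet.empty
  refine ⟨E, fun n => ((e n).1 : ℝ), ?_, ?_, ?_, ?_, ?_, ?_, ?_⟩
  · exact fun n => MeasurableSet.disjointed (fun m => hRmeas (e m)) n
  · exact disjoint_disjointed _
  · intro n
    refine (hEsub n).trans ?_
    simp only [hR]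
    split_ifs with h
    · exact (Set.inter_subset_left).trans Pset_subset_Icc
    · exact Set.empty_subset _
  · -- slope capture
    intro n x hx a ha
    have hx' := hEsub n hx
    simp only [hR] at hx'
    split_ifs at hx' with h
    · exact slope_capture hf h.2 hx'.1 ha
    · exact absurd hx' (Set.notMem_empty x)
  · -- image lower bound
    intro n
    by_cases h : ((e n).1 : ℝ) ≠ 0 ∧ 1 ≤ (e n).2.1
    · have hc : 0 < (1 - 3*ε) * |((e n).1 : ℝ)| := by
        have : 0 < |((e n).1:ℝ)| := abs_pos.mpr h.1
        nlinarith
      exact image_lower hc (fun x hx y hy => hbil (e n) h.1 h.2 x (hEsub n hx) y (hEsub n hy))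
    · have : E n = ∅ := by
        apply Set.eq_empty_of_subset_empty
        refine (hEsub n).trans ?_
        simp only [hR]
        rw [if_neg h]
      rw [this]
      simp
  · -- injectivity
    intro n
    by_cases h : ((e n).1 : ℝ) ≠ 0 ∧ 1 ≤ (e n).2.1
    · intro u hu v hv huv
      have hb := hbil (e n) h.1 h.2 u (hEsub n hu) v (hEsub n hv)
      rw [huv, sub_self, abs_zero] at hb
      have hc : 0 < (1 - 3*ε) * |((e n).1 : ℝ)| := by
        have : 0 < |((e n).1:ℝ)| := abs_pos.mpr h.1
        nlinarith
      have : |v - u| = 0 := by nlinarith [abs_nonneg (v - u)]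
      have := abs_eq_zero.mp this
      linarith
    · have : E n = ∅ := by
        apply Set.eq_empty_of_subset_empty
        refine (hEsub n).trans ?_
        simp only [hR]
        rw [if_neg h]
      rw [this]
      exact Set.injOn_empty f
  · -- coverage
    intro x hxI a ha ha0
    obtain ⟨q, hq0, hqa, k, hk, hxP⟩ := coverage hf hε1 hxI ha ha0
    have hkpos : (0:ℝ) < 2*(k:ℝ) := by
      have : (0:ℝ) < (k:ℝ) := by exact_mod_cast hk
      linarith
    set j : ℤ := ⌊x * (2*(k:ℝ))⌋ with hj
    have hxIco : x ∈ Ico ((j:ℝ)/(2*(k:ℝ))) (((j:ℝ)+1)/(2*(k:ℝ))) := by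
      constructor
      · rw [div_le_iff₀ hkpos]
        exact Int.floor_le _
      · rw [lt_div_iff₀ hkpos]
        exact Int.lt_floor_add_one _
    have hmem : x ∈ R (q, k, j) := by
      have hcond : ((q:ℝ) ≠ 0 ∧ 1 ≤ k) := ⟨hq0, hk⟩
      simp only [hR]
      rw [if_pos hcond]
      exact ⟨hxP, by exact_mod_cast hxIco⟩
    have : x ∈ ⋃ m, R (e m) := by
      refine Set.mem_iUnion.mpr ⟨(Denumerable.eqv (ℚ × ℕ × ℤ)) (q, k, j), ?_⟩
      rw [he]
      simp only [Equiv.symm_apply_apply]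
      exact hmem
    rwa [hE, iUnion_disjointed]

lemma area_bound {f : ℝ → ℝ} (hf : Measurable f) (hmaps : MapsTo f (Icc 0 1) (Icc 0 1))
    (H1 : volume {x ∈ Icc (0:ℝ) 1 | ¬∃ a, HasApproxDerivAt (Icc 0 1) f a x} = 0)
    (K : ℕ)
    (H2 : volume {y ∈ Icc (0:ℝ) 1 | (K : ℕ∞) < (Icc (0:ℝ) 1 ∩ f ⁻¹' {y}).encard} = 0)
    {ε : ℝ} (hε1 : 0 < ε) (hε2 : ε ≤ 1/12) :
    ∃ W : Set ℝ, MeasurableSet W ∧ W ⊆ f '' Icc (0:ℝ) 1 ∧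
      ∫⁻ x in Icc (0:ℝ) 1, ENNReal.ofReal |approxDeriv (Icc 0 1) f x| ≤
        ENNReal.ofReal ((1+ε)/(1-3*ε)) * ((K : ℝ≥0∞) * volume W) := by
  classical
  obtain ⟨E, qv, hEmeas, hEdisj, hEsub, hslope, himg, hinj, hcover⟩ := pieces hf hε1 hε2
  set D := approxDeriv (Icc 0 1) f with hD
  set g : ℝ → ℝ≥0∞ := fun x => ENNReal.ofReal |D x| with hg
  set Z := toMeasurable volume {x ∈ Icc (0:ℝ) 1 | ¬∃ a, HasApproxDerivAt (Icc 0 1) f a x} with hZ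
  have hZmeas : MeasurableSet Z := measurableSet_toMeasurable _ _
  have hZ0 : volume Z = 0 := by rw [hZ, measure_toMeasurable]; exact H1
  set A1 := Icc (0:ℝ) 1 \ Z with hA1
  have hA1meas : MeasurableSet A1 := measurableSet_Icc.diff hZmeas
  have hA1diff : ∀ x ∈ A1, ∃ a, HasApproxDerivAt (Icc 0 1) f a x := by
    intro x hx
    by_contra h
    exact hx.2 (subset_toMeasurable _ _ ⟨hx.1, h⟩)
  set M := fun n => f '' E n with hM
  have hMmeas : ∀ n, MeasurableSet (M n) :=
    fun n => (hEmeas n).image_of_measurable_injOn hf (hinj n)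
  set W := ⋃ n, M n with hW
  have hWmeas : MeasurableSet W := MeasurableSet.iUnion hMmeas
  have hWsub : W ⊆ f '' Icc (0:ℝ) 1 := Set.iUnion_subset fun n => Set.image_mono (hEsub n)
  refine ⟨W, hWmeas, hWsub, ?_⟩
  have hUmeas : MeasurableSet (⋃ n, E n) := MeasurableSet.iUnion hEmeas
  have h13 : (0:ℝ) < 1 - 3*ε := by linarith
  -- step: reduce to A1
  have step0 : ∫⁻ x in Icc (0:ℝ) 1, g x ≤ ∫⁻ x in A1, g x := by
    have hsub : Icc (0:ℝ) 1 ⊆ A1 ∪ Z := fun x hx => by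
      by_cases hz : x ∈ Z
      · exact Or.inr hz
      · exact Or.inl ⟨hx, hz⟩
    calc ∫⁻ x in Icc (0:ℝ) 1, g x ≤ ∫⁻ x in A1 ∪ Z, g x := lintegral_mono_set hsub
      _ ≤ (∫⁻ x in A1, g x) + ∫⁻ x in Z, g x := lintegral_union_le _ _ _
      _ = ∫⁻ x in A1, g x := by rw [setLIntegral_measure_zero _ _ hZ0, add_zero]
  -- step: split A1
  have step1 : ∫⁻ x in A1, g x ≤ (∫⁻ x in (⋃ n, E n), g x) + ∫⁻ x in A1 \ ⋃ n, E n, g x := by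
    have hsub : A1 ⊆ (⋃ n, E n) ∪ (A1 \ ⋃ n, E n) := fun x hx => by
      by_cases hu : x ∈ ⋃ n, E n
      · exact Or.inl hu
      · exact Or.inr ⟨hx, hu⟩
    calc ∫⁻ x in A1, g x ≤ ∫⁻ x in (⋃ n, E n) ∪ (A1 \ ⋃ n, E n), g x := lintegral_mono_set hsub
      _ ≤ _ := lintegral_union_le _ _ _
  have step2 : ∫⁻ x in A1 \ ⋃ n, E n, g x = 0 := by
    have hzero : ∀ᵐ x ∂volume, x ∈ A1 \ ⋃ n, E n → g x = (fun _ => (0:ℝ≥0∞)) x := by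
      apply ae_of_all
      rintro x ⟨hxA, hxU⟩
      obtain ⟨a, ha⟩ := hA1diff x hxA
      have hDa : D x = a := approxDeriv_eq hf ha
      have ha0 : a = 0 := by
        by_contra h
        exact hxU (hcover x hxA.1 a ha h)
      simp only [hg, hDa, ha0, abs_zero, ENNReal.ofReal_zero]
    rw [setLIntegral_congr_fun_ae (hA1meas.diff hUmeas) hzero, lintegral_zero]
  -- step: per-piece bound
  have step4 : ∀ n, ∫⁻ x in E n, g x ≤
      ENNReal.ofReal ((1+ε)/(1-3*ε)) * volume (M n) := by
    intro n
    have hpt : ∀ x ∈ E n, g x ≤ ENNReal.ofReal ((1+ε) * |qv n|) := by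
      intro x hx
      have hq0 : (0:ℝ) ≤ (1+ε) * |qv n| := by positivity
      by_cases hd : ∃ a, HasApproxDerivAt (Icc 0 1) f a x
      · obtain ⟨a, ha⟩ := hd
        have hDa : D x = a := approxDeriv_eq hf ha
        have hsl := hslope n x hx a ha
        have : |a| ≤ (1+ε) * |qv n| := by
          have := abs_sub_abs_le_abs_sub a (qv n)
          nlinarith [abs_nonneg (qv n)]
        rw [hg]
        simp only [hDa]
        exact ENNReal.ofReal_le_ofReal this
      · have hD0 : D x = 0 := by rw [hD, approxDeriv, dif_neg hd]
        rw [hg]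
        simp only [hD0, abs_zero, ENNReal.ofReal_zero]
        exact zero_le
    calc ∫⁻ x in E n, g x ≤ ∫⁻ _ in E n, ENNReal.ofReal ((1+ε) * |qv n|) :=
          setLIntegral_mono' (hEmeas n) hpt
      _ = ENNReal.ofReal ((1+ε) * |qv n|) * volume (E n) := setLIntegral_const _ _
      _ = ENNReal.ofReal ((1+ε)/(1-3*ε)) * (ENNReal.ofReal ((1-3*ε) * |qv n|) * volume (E n)) := by
          rw [← mul_assoc, ← ENNReal.ofReal_mul (by positivity)]
          congr 2
          field_simp [h13.ne']
          exact (mul_div_cancel_right₀ _ (by linarith)).symm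
      _ ≤ ENNReal.ofReal ((1+ε)/(1-3*ε)) * volume (M n) :=
          mul_le_mul_right (himg n) _
  -- step: counting bound
  have step6 : ∑' n, volume (M n) ≤ (K : ℝ≥0∞) * volume W := by
    have hfib : ∀ᵐ y ∂volume, y ∉ {y : ℝ | y ∈ Icc (0:ℝ) 1 ∧
        (K : ℕ∞) < (Icc (0:ℝ) 1 ∩ f ⁻¹' {y}).encard} :=
      measure_eq_zero_iff_ae_notMem.mp H2
    have hpt : ∀ᵐ y ∂volume, (∑' n, (M n).indicator (1 : ℝ → ℝ≥0∞) y) ≤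
        (K : ℝ≥0∞) * W.indicator 1 y := by
      filter_upwards [hfib] with y hy
      by_cases hyW : y ∈ W
      · rw [Set.indicator_of_mem hyW, Pi.one_apply, mul_one]
        have hyI : y ∈ Icc (0:ℝ) 1 := hmaps.image_subset (hWsub hyW)
        have henc : (Icc (0:ℝ) 1 ∩ f ⁻¹' {y}).encard ≤ (K : ℕ∞) := by
          by_contra h
          exact hy ⟨hyI, not_le.mp h⟩
        rw [ENNReal.tsum_eq_iSup_sum]
        apply iSup_le
        intro s
        set t := s.filter (fun n => y ∈ M n) with ht
        have hsum : ∑ n ∈ s, (M n).indicator (1 : ℝ → ℝ≥0∞) y = (t.card : ℝ≥0∞) := by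
          rw [ht]
          rw [← Finset.sum_boole]
          apply Finset.sum_congr rfl
          intro n _
          by_cases h : y ∈ M n
          · rw [Set.indicator_of_mem h, if_pos h, Pi.one_apply]
          · rw [Set.indicator_of_notMem h, if_neg h]
        rw [hsum]
        -- injection into the fiber
        set φ : ℕ → ℝ := fun n => if h : y ∈ M n then h.choose else 0 with hφ
        have hφmem : ∀ n ∈ t, φ n ∈ E n ∧ f (φ n) = y := by
          intro n hn
          have hyn : y ∈ M n := (Finset.mem_filter.mp hn).2
          rw [hφ]
          simp only [dif_pos hyn]
          exact hyn.choose_spec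
        have hφinj : Set.InjOn φ ↑t := by
          intro n hn m hm hnm
          by_contra hne
          have h1 := (hφmem n (by exact_mod_cast hn)).1
          have h2 := (hφmem m (by exact_mod_cast hm)).1
          rw [hnm] at h1
          exact (Set.disjoint_left.mp (hEdisj hne)) h1 h2
        have hsubfib : φ '' ↑t ⊆ Icc (0:ℝ) 1 ∩ f ⁻¹' {y} := by
          rintro _ ⟨n, hn, rfl⟩
          have := hφmem n (by exact_mod_cast hn)
          exact ⟨hEsub n this.1, by simp [this.2]⟩
        have hchain : (t.card : ℕ∞) ≤ (K : ℕ∞) := by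
          calc (t.card : ℕ∞) = (↑t : Set ℕ).encard := (Set.encard_coe_eq_coe_finsetCard t).symm
            _ = (φ '' ↑t).encard := (hφinj.encard_image).symm
            _ ≤ (Icc (0:ℝ) 1 ∩ f ⁻¹' {y}).encard := Set.encard_le_encard hsubfib
            _ ≤ (K : ℕ∞) := henc
        have : t.card ≤ K := by exact_mod_cast hchain
        exact_mod_cast Nat.cast_le.mpr this
      · rw [Set.indicator_of_notMem hyW, mul_zero]
        have : ∀ n, (M n).indicator (1 : ℝ → ℝ≥0∞) y = 0 := by
          intro n
          apply Set.indicator_of_notMem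
          intro h
          exact hyW (Set.mem_iUnion.mpr ⟨n, h⟩)
        simp [this]
    calc ∑' n, volume (M n) = ∑' n, ∫⁻ y, (M n).indicator 1 y ∂volume := by
          congr 1; ext n; rw [lintegral_indicator_one (hMmeas n)]
      _ = ∫⁻ y, ∑' n, (M n).indicator 1 y ∂volume :=
          (lintegral_tsum (fun n => ((measurable_one.indicator (hMmeas n)).aemeasurable))).symm
      _ ≤ ∫⁻ y, (K : ℝ≥0∞) * W.indicator 1 y ∂volume := lintegral_mono_ae hpt
      _ = (K : ℝ≥0∞) * volume W := by
          rw [lintegral_const_mul _ (measurable_one.indicator hWmeas),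
            lintegral_indicator_one hWmeas]
  -- combine
  calc ∫⁻ x in Icc (0:ℝ) 1, g x ≤ ∫⁻ x in A1, g x := step0
    _ ≤ (∫⁻ x in (⋃ n, E n), g x) + ∫⁻ x in A1 \ ⋃ n, E n, g x := step1
    _ = ∫⁻ x in (⋃ n, E n), g x := by rw [step2, add_zero]
    _ ≤ ∑' n, ∫⁻ x in E n, g x := lintegral_iUnion_le _ _
    _ ≤ ∑' n, ENNReal.ofReal ((1+ε)/(1-3*ε)) * volume (M n) := ENNReal.tsum_le_tsum step4
    _ = ENNReal.ofReal ((1+ε)/(1-3*ε)) * ∑' n, volume (M n) := ENNReal.tsum_mul_left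
    _ ≤ ENNReal.ofReal ((1+ε)/(1-3*ε)) * ((K : ℝ≥0∞) * volume W) := mul_le_mul_right step6 _

lemma approxDeriv_aemeasurable {f : ℝ → ℝ} (hf : Measurable f)
    (H1 : volume {x ∈ Icc (0:ℝ) 1 | ¬∃ a, HasApproxDerivAt (Icc 0 1) f a x} = 0) :
    AEMeasurable (approxDeriv (Icc 0 1) f) (volume.restrict (Icc 0 1)) := by
  classical
  set D := approxDeriv (Icc 0 1) f with hD
  have hexists : ∀ m : ℕ, ∃ φ : ℝ → ℝ, Measurable φ ∧
      ∀ x ∈ Icc (0:ℝ) 1, (∃ a, HasApproxDerivAt (Icc 0 1) f a x) →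
        |φ x - D x| ≤ 2 * (1/(12*((m:ℝ)+1))) * |D x| := by
    intro m
    set εm : ℝ := 1/(12*((m:ℝ)+1)) with hεm
    have hm0 : (0:ℝ) ≤ (m:ℝ) := Nat.cast_nonneg m
    have hεm1 : 0 < εm := by positivity
    have hεm2 : εm ≤ 1/12 := by
      rw [hεm, div_le_div_iff₀ (by positivity) (by norm_num)]
      nlinarith
    obtain ⟨E, qv, hEmeas, hEdisj, hEsub, hslope, himg, hinj, hcover⟩ := pieces hf hεm1 hεm2
    set φ : ℝ → ℝ := fun x => if h : ∃ n, x ∈ E n then qv (Nat.find h) else 0 with hφ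
    have hφmeas : Measurable φ := by
      intro t ht
      have hpre : φ ⁻¹' t = (⋃ n, ((E n ∩ ⋂ l, ⋂ _ : l < n, (E l)ᶜ) ∩
            (if qv n ∈ t then Set.univ else ∅))) ∪
          ((⋃ n, E n)ᶜ ∩ (if (0:ℝ) ∈ t then Set.univ else ∅)) := by
        ext x
        simp only [Set.mem_preimage, Set.mem_union, Set.mem_iUnion, Set.mem_inter_iff,
          Set.mem_compl_iff, Set.mem_iInter]
        constructor
        · intro hx
          by_cases h : ∃ n, x ∈ E n
          · left
            refine ⟨Nat.find h, ⟨Nat.find_spec h, fun l hl => Nat.find_min h hl⟩, ?_⟩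
            rw [hφ] at hx; simp only [dif_pos h] at hx
            rw [if_pos hx]; exact Set.mem_univ _
          · right
            refine ⟨h, ?_⟩
            rw [hφ] at hx; simp only [dif_neg h] at hx
            rw [if_pos hx]; exact Set.mem_univ _
        · rintro (⟨n, ⟨hn1, hn2⟩, hn3⟩ | ⟨h1, h2⟩)
          · have h : ∃ n, x ∈ E n := ⟨n, hn1⟩
            have hfind : Nat.find h = n := by
              rw [Nat.find_eq_iff]
              exact ⟨hn1, fun l hl => hn2 l hl⟩
            rw [hφ]; simp only [dif_pos h, hfind]
            by_cases hq : qv n ∈ t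
            · exact hq
            · rw [if_neg hq] at hn3; exact absurd hn3 (Set.notMem_empty x)
          · have h : ¬∃ n, x ∈ E n := h1
            rw [hφ]; simp only [dif_neg h]
            by_cases hq : (0:ℝ) ∈ t
            · exact hq
            · rw [if_neg hq] at h2; exact absurd h2 (Set.notMem_empty x)
      rw [hpre]
      have hite : ∀ c : Prop, MeasurableSet (if c then (Set.univ : Set ℝ) else ∅) := by
        intro c
        split_ifs
        · exact MeasurableSet.univ
        · exact MeasurableSet.empty
      apply MeasurableSet.union
      · apply MeasurableSet.iUnion
        intro n
        exact (((hEmeas n).inter (MeasurableSet.iInter fun l =>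
          MeasurableSet.iInter fun _ => (hEmeas l).compl))).inter (hite _)
      · exact (MeasurableSet.iUnion hEmeas).compl.inter (hite _)
    refine ⟨φ, hφmeas, ?_⟩
    rintro x hxI ⟨a, ha⟩
    have hDa : D x = a := approxDeriv_eq hf ha
    by_cases h : ∃ n, x ∈ E n
    · have hxn : x ∈ E (Nat.find h) := Nat.find_spec h
      have hsl := hslope (Nat.find h) x hxn a ha
      have hφx : φ x = qv (Nat.find h) := by rw [hφ]; simp only [dif_pos h]
      set q := qv (Nat.find h)
      rw [hφx, hDa]
      have h1 : |q| ≤ |a| + |a - q| := by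
        have : |q| = |a - (a - q)| := by congr 1; ring
        rw [this]
        exact (abs_sub _ _).trans (by rfl)
      have h2 : (1 - εm) * |q| ≤ |a| := by nlinarith
      have h3 : |q| ≤ 2 * |a| := by nlinarith [abs_nonneg q, abs_nonneg a]
      have h4 : |q - a| ≤ εm * |q| := by
        rw [← abs_neg]
        have : -(q - a) = a - q := by ring
        rw [this]
        exact hsl
      calc |q - a| ≤ εm * |q| := h4
        _ ≤ εm * (2 * |a|) := by nlinarith
        _ = 2 * εm * |a| := by ring
    · have ha0 : a = 0 := by
        by_contra h0
        exact h (Set.mem_iUnion.mp (hcover x hxI a ha h0))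
      have hφx : φ x = 0 := by rw [hφ]; simp only [dif_neg h]
      rw [hφx, hDa, ha0]
      simp
  choose φ hφmeas hφbound using hexists
  apply aemeasurable_of_tendsto_metrizable_ae atTop (fun m => (hφmeas m).aemeasurable)
  have hae1 : ∀ᵐ x ∂volume.restrict (Icc (0:ℝ) 1), x ∈ Icc (0:ℝ) 1 :=
    ae_restrict_mem measurableSet_Icc
  have hae2 : ∀ᵐ x ∂volume.restrict (Icc (0:ℝ) 1),
      x ∉ {x : ℝ | x ∈ Icc (0:ℝ) 1 ∧ ¬∃ a, HasApproxDerivAt (Icc 0 1) f a x} :=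
    ae_restrict_of_ae (measure_eq_zero_iff_ae_notMem.mp H1)
  filter_upwards [hae1, hae2] with x hx1 hx2
  have hdiff : ∃ a, HasApproxDerivAt (Icc 0 1) f a x := by
    by_contra h
    exact hx2 ⟨hx1, h⟩
  have hb : ∀ m : ℕ, dist (φ m x) (D x) ≤ 2 * (1/(12*((m:ℝ)+1))) * |D x| := by
    intro m
    rw [Real.dist_eq]
    exact hφbound m x hx1 hdiff
  apply tendsto_iff_dist_tendsto_zero.mpr
  apply squeeze_zero (fun m => dist_nonneg) hb
  have : Tendsto (fun m : ℕ => (1:ℝ)/((m:ℝ)+1)) atTop (𝓝 0) :=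
    tendsto_one_div_add_atTop_nhds_zero_nat
  have h2 : Tendsto (fun m : ℕ => 2 * ((1:ℝ)/((m:ℝ)+1)) * (|D x|/12)) atTop (𝓝 (2 * 0 * (|D x|/12))) :=
    (this.const_mul 2).mul_const _
  rw [mul_zero, zero_mul] at h2
  have heq : (fun m : ℕ => 2 * ((1:ℝ)/(12*((m:ℝ)+1))) * |D x|) =
      fun m : ℕ => 2 * ((1:ℝ)/((m:ℝ)+1)) * (|D x|/12) := by
    funext m
    have hm : ((m:ℝ)+1) ≠ 0 := by positivity
    field_simp
  rw [heq]
  exact h2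

lemma sum_vol_le {N : ℕ} (f : Fin N → ℝ → ℝ) (W : Fin N → Set ℝ)
    (hWmeas : ∀ n, MeasurableSet (W n)) (hWsub : ∀ n, W n ⊆ f n '' Icc (0:ℝ) 1)
    (hWI : ∀ n, W n ⊆ Icc (0:ℝ) 1)
    (L : ℕ)
    (hL : IsGreatest {m : ℕ | 1 ≤ m ∧ m ≤ N ∧ ∃ s : Finset (Fin N), s.card = m ∧
        0 < volume (⋂ n ∈ s, f n '' Icc (0 : ℝ) 1)} L) :
    ∑ n : Fin N, volume (W n) ≤ (L : ℝ≥0∞) := by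
  classical
  set B := ⋃ (s : Finset (Fin N)) (_ : s.card = L + 1), ⋂ n ∈ s, f n '' Icc (0:ℝ) 1 with hB
  have hB0 : volume B = 0 := by
    rw [hB]
    rw [measure_iUnion_null_iff]
    intro s
    rw [measure_iUnion_null_iff]
    intro hcard
    by_contra hpos
    have hpos' : 0 < volume (⋂ n ∈ s, f n '' Icc (0:ℝ) 1) := pos_iff_ne_zero.mpr hpos
    have hmem : L + 1 ∈ {m : ℕ | 1 ≤ m ∧ m ≤ N ∧ ∃ s : Finset (Fin N), s.card = m ∧
        0 < volume (⋂ n ∈ s, f n '' Icc (0 : ℝ) 1)} := by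
      refine ⟨by omega, ?_, s, hcard, hpos'⟩
      calc L + 1 = s.card := hcard.symm
        _ ≤ (Finset.univ : Finset (Fin N)).card := Finset.card_le_univ s
        _ = N := by rw [Finset.card_univ, Fintype.card_fin]
    have := hL.2 hmem
    omega
  have hpt : ∀ᵐ y ∂volume, ∑ n : Fin N, (W n).indicator (1 : ℝ → ℝ≥0∞) y ≤
      (L : ℝ≥0∞) * (Icc (0:ℝ) 1).indicator 1 y := by
    filter_upwards [measure_eq_zero_iff_ae_notMem.mp hB0] with y hyB
    by_cases hyI : y ∈ Icc (0:ℝ) 1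
    · rw [Set.indicator_of_mem hyI, Pi.one_apply, mul_one]
      set t := Finset.univ.filter (fun n => y ∈ W n) with ht
      have hsum : ∑ n : Fin N, (W n).indicator (1 : ℝ → ℝ≥0∞) y = (t.card : ℝ≥0∞) := by
        rw [ht, ← Finset.sum_boole]
        apply Finset.sum_congr rfl
        intro n _
        by_cases h : y ∈ W n
        · rw [Set.indicator_of_mem h, if_pos h, Pi.one_apply]
        · rw [Set.indicator_of_notMem h, if_neg h]
      rw [hsum]
      have hcard : t.card ≤ L := by
        by_contra hgt
        obtain ⟨u, hu, hucard⟩ := Finset.exists_subset_card_eq (s := t) (n := L+1) (by omega)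
        apply hyB
        rw [hB]
        refine Set.mem_iUnion.mpr ⟨u, Set.mem_iUnion.mpr ⟨hucard, ?_⟩⟩
        apply Set.mem_biInter
        intro n hn
        have : y ∈ W n := (Finset.mem_filter.mp (hu hn)).2
        exact hWsub n this
      exact_mod_cast Nat.cast_le.mpr hcard
    · have hz : ∀ n : Fin N, (W n).indicator (1 : ℝ → ℝ≥0∞) y = 0 := by
        intro n
        apply Set.indicator_of_notMem
        exact fun h => hyI (hWI n h)
      rw [Set.indicator_of_notMem hyI, mul_zero]
      simp [hz]
  calc ∑ n : Fin N, volume (W n)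
      = ∑ n : Fin N, ∫⁻ y, (W n).indicator 1 y ∂volume := by
        apply Finset.sum_congr rfl
        intro n _
        rw [lintegral_indicator_one (hWmeas n)]
    _ = ∫⁻ y, ∑ n : Fin N, (W n).indicator 1 y ∂volume :=
        (lintegral_finset_sum _ (fun n _ => measurable_one.indicator (hWmeas n))).symm
    _ ≤ ∫⁻ y, (L : ℝ≥0∞) * (Icc (0:ℝ) 1).indicator 1 y ∂volume := lintegral_mono_ae hpt
    _ = (L : ℝ≥0∞) * volume (Icc (0:ℝ) 1) := by
        rw [lintegral_const_mul _ (measurable_one.indicator measurableSet_Icc),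
          lintegral_indicator_one measurableSet_Icc]
    _ = (L : ℝ≥0∞) := by
        rw [Real.volume_Icc]
        norm_num

end Stmt10Aux

theorem stmt10 (N : ℕ) (f g' : Fin N → ℝ → ℝ)
    (hfmeas : ∀ n, Measurable (f n)) (hgmeas : ∀ n, Measurable (g' n))
    (hmaps : ∀ n, MapsTo (f n) (Icc 0 1) (Icc 0 1))
    (H1diff : ∀ n,
      MeasureTheory.volume {x ∈ Icc (0 : ℝ) 1 | ¬∃ a, HasApproxDerivAt (Icc 0 1) (f n) a x} = 0)
    (H1LuzinN : ∀ n, ∀ A ⊆ Icc (0 : ℝ) 1,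
      MeasureTheory.volume A = 0 → MeasureTheory.volume (f n '' A) = 0)
    (K : ℕ)
    (H2 : ∀ n,
      MeasureTheory.volume {y ∈ Icc (0 : ℝ) 1 | (K : ℕ∞) < (Icc (0 : ℝ) 1 ∩ f n ⁻¹' {y}).encard} = 0)
    (H3 : ∀ n, ∀ A : Set ℝ,
      MeasureTheory.volume A = 0 → MeasureTheory.volume (Icc (0 : ℝ) 1 ∩ f n ⁻¹' A) = 0)
    (L : ℕ)
    (hL : IsGreatest {m : ℕ | 1 ≤ m ∧ m ≤ N ∧
      ∃ s : Finset (Fin N), s.card = m ∧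
        0 < MeasureTheory.volume (⋂ n ∈ s, f n '' Icc (0 : ℝ) 1)} L)
    -- |gₙ(x)| < (1/(KL)) |fₙ'(x)| a.e.
    (hC1 : ∀ n, ∀ᵐ x ∂μ01,
      |g' n x| < 1 / ((K : ℝ) * (L : ℝ)) * |approxDeriv (Icc 0 1) (f n) x|) :
    ∑ n : Fin N, ∫ x in Icc (0 : ℝ) 1, |g' n x| < 1 := by
  classical
  have hL1 : 1 ≤ L := hL.1.1
  have hN1 : 1 ≤ N := le_trans hL1 hL.1.2.1
  have hμuniv : μ01 Set.univ = 1 := by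
    rw [Measure.restrict_apply_univ, Real.volume_Icc]
    norm_num
  have hμne : μ01 ≠ 0 := by
    intro h
    rw [h] at hμuniv
    simp at hμuniv
  by_cases hK0 : K = 0
  · exfalso
    set n0 : Fin N := ⟨0, by omega⟩
    have hfalse : ∀ᵐ _x ∂μ01, False := by
      filter_upwards [hC1 n0] with x hx
      rw [hK0] at hx
      norm_num at hx
      nlinarith [abs_nonneg (g' n0 x), hx]
    have h1 : μ01 Set.univ = 0 := by
      have := ae_iff.mp hfalse
      simpa using this
    rw [h1] at hμuniv
    exact zero_ne_one hμuniv
  have hK1 : 1 ≤ K := Nat.one_le_iff_ne_zero.mpr hK0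
  have hKpos : (0:ℝ) < (K:ℝ) := by exact_mod_cast Nat.pos_of_ne_zero hK0
  have hLpos : (0:ℝ) < (L:ℝ) := by exact_mod_cast Nat.pos_of_ne_zero (by omega)
  set c : ℝ := 1 / ((K:ℝ) * (L:ℝ)) with hc
  have hKLpos : (0:ℝ) < (K:ℝ) * (L:ℝ) := mul_pos hKpos hLpos
  have hcpos : 0 < c := by rw [hc]; positivity
  set D : Fin N → ℝ → ℝ := fun n => approxDeriv (Icc 0 1) (f n) with hD
  -- T bound for each η
  have hT : ∀ η : ℝ, 0 < η → η ≤ 1/12 →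
      ∑ n : Fin N, ∫⁻ x in Icc (0:ℝ) 1, ENNReal.ofReal |D n x| ≤
        ENNReal.ofReal ((1+η)/(1-3*η)) * ((K : ℝ≥0∞) * (L : ℝ≥0∞)) := by
    intro η hη1 hη2
    choose W hWmeas hWsub hWbound using
      fun n => Stmt10Aux.area_bound (hfmeas n) (hmaps n) (H1diff n) K (H2 n) hη1 hη2
    have hWI : ∀ n, W n ⊆ Icc (0:ℝ) 1 := fun n => (hWsub n).trans (hmaps n).image_subset
    have hsum := Stmt10Aux.sum_vol_le f W hWmeas hWsub hWI L hL
    calc ∑ n : Fin N, ∫⁻ x in Icc (0:ℝ) 1, ENNReal.ofReal |D n x|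
        ≤ ∑ n : Fin N, ENNReal.ofReal ((1+η)/(1-3*η)) * ((K : ℝ≥0∞) * volume (W n)) :=
          Finset.sum_le_sum (fun n _ => hWbound n)
      _ = ENNReal.ofReal ((1+η)/(1-3*η)) * ((K : ℝ≥0∞) * ∑ n : Fin N, volume (W n)) := by
          rw [← Finset.mul_sum, ← Finset.mul_sum]
      _ ≤ ENNReal.ofReal ((1+η)/(1-3*η)) * ((K : ℝ≥0∞) * (L : ℝ≥0∞)) := by
          gcongr
  -- limit η → 0
  have hTfin : ∑ n : Fin N, ∫⁻ x in Icc (0:ℝ) 1, ENNReal.ofReal |D n x| ≤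
      (K : ℝ≥0∞) * (L : ℝ≥0∞) := by
    apply ENNReal.le_of_forall_pos_le_add
    intro δ hδ _
    have hδ' : (0:ℝ) < (δ:ℝ) := hδ
    set η : ℝ := min (1/12) ((δ:ℝ)/(6*((K:ℝ)*(L:ℝ)))) with hη
    have hη1 : 0 < η := by
      rw [hη]
      apply lt_min (by norm_num)
      positivity
    have hη2 : η ≤ 1/12 := min_le_left _ _
    have hη3 : 6*η*((K:ℝ)*(L:ℝ)) ≤ (δ:ℝ) := by
      have : η ≤ (δ:ℝ)/(6*((K:ℝ)*(L:ℝ))) := min_le_right _ _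
      rw [le_div_iff₀ (by positivity)] at this
      linarith
    have hfrac : (1+η)/(1-3*η) ≤ 1 + 6*η := by
      rw [div_le_iff₀ (by linarith)]
      nlinarith
    have hKLcast : (K : ℝ≥0∞) * (L : ℝ≥0∞) = ENNReal.ofReal ((K:ℝ)*(L:ℝ)) := by
      rw [ENNReal.ofReal_mul (by positivity), ENNReal.ofReal_natCast, ENNReal.ofReal_natCast]
    calc ∑ n : Fin N, ∫⁻ x in Icc (0:ℝ) 1, ENNReal.ofReal |D n x|
        ≤ ENNReal.ofReal ((1+η)/(1-3*η)) * ((K : ℝ≥0∞) * (L : ℝ≥0∞)) := hT η hη1 hη2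
      _ ≤ ENNReal.ofReal (1+6*η) * ((K : ℝ≥0∞) * (L : ℝ≥0∞)) :=
          mul_le_mul_left (ENNReal.ofReal_le_ofReal hfrac) _
      _ = (K : ℝ≥0∞) * (L : ℝ≥0∞) + ENNReal.ofReal (6*η) * ((K : ℝ≥0∞) * (L : ℝ≥0∞)) := by
          rw [ENNReal.ofReal_add (by norm_num) (by positivity), ENNReal.ofReal_one, add_mul,
            one_mul]
      _ ≤ (K : ℝ≥0∞) * (L : ℝ≥0∞) + ↑δ := by
          apply add_le_add_right
          rw [hKLcast, ← ENNReal.ofReal_mul (by positivity)]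
          calc ENNReal.ofReal (6*η*((K:ℝ)*(L:ℝ))) ≤ ENNReal.ofReal (δ:ℝ) :=
                ENNReal.ofReal_le_ofReal hη3
            _ = ↑δ := ENNReal.ofReal_coe_nnreal
  -- D is AE measurable
  have hDmeas : ∀ n, AEMeasurable (D n) μ01 :=
    fun n => Stmt10Aux.approxDeriv_aemeasurable (hfmeas n) (H1diff n)
  -- rewrite the H integrals
  have hHeq : ∀ n, ∫⁻ x in Icc (0:ℝ) 1, ENNReal.ofReal (c * |D n x|) =
      ENNReal.ofReal c * ∫⁻ x in Icc (0:ℝ) 1, ENNReal.ofReal |D n x| := by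
    intro n
    have habs : AEMeasurable (fun x => ENNReal.ofReal |D n x|) μ01 :=
      (continuous_abs.measurable.comp_aemeasurable (hDmeas n)).ennreal_ofReal
    rw [← lintegral_const_mul'' _ habs]
    apply lintegral_congr
    intro x
    rw [ENNReal.ofReal_mul hcpos.le]
  have hHle : ∀ n, ∫⁻ x in Icc (0:ℝ) 1, ENNReal.ofReal (c * |D n x|) ≤ 1 := by
    intro n
    rw [hHeq n]
    have hsingle : ∫⁻ x in Icc (0:ℝ) 1, ENNReal.ofReal |D n x| ≤ (K : ℝ≥0∞) * (L : ℝ≥0∞) := by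
      refine le_trans ?_ hTfin
      exact Finset.single_le_sum (f := fun m : Fin N => ∫⁻ x in Icc (0:ℝ) 1, ENNReal.ofReal |D m x|) (fun m _ => zero_le) (Finset.mem_univ n)
    calc ENNReal.ofReal c * ∫⁻ x in Icc (0:ℝ) 1, ENNReal.ofReal |D n x|
        ≤ ENNReal.ofReal c * ((K : ℝ≥0∞) * (L : ℝ≥0∞)) := mul_le_mul_right hsingle _
      _ = 1 := by
          rw [show (K : ℝ≥0∞) * (L : ℝ≥0∞) = ENNReal.ofReal ((K:ℝ)*(L:ℝ)) by
            rw [ENNReal.ofReal_mul (by positivity), ENNReal.ofReal_natCast,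
              ENNReal.ofReal_natCast]]
          rw [← ENNReal.ofReal_mul hcpos.le, hc]
          rw [show 1 / ((K:ℝ)*(L:ℝ)) * ((K:ℝ)*(L:ℝ)) = 1 by field_simp]
          exact ENNReal.ofReal_one
  -- strict inequality per n
  have hstrict : ∀ n, ∫⁻ x in Icc (0:ℝ) 1, ENNReal.ofReal |g' n x| <
      ∫⁻ x in Icc (0:ℝ) 1, ENNReal.ofReal (c * |D n x|) := by
    intro n
    have hlt : ∀ᵐ x ∂μ01, ENNReal.ofReal |g' n x| < ENNReal.ofReal (c * |D n x|) := by
      filter_upwards [hC1 n] with x hx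
      have h0 : 0 < c * |D n x| := lt_of_le_of_lt (abs_nonneg _) hx
      exact (ENNReal.ofReal_lt_ofReal_iff h0).mpr hx
    have hle : ∫⁻ x in Icc (0:ℝ) 1, ENNReal.ofReal |g' n x| ≤
        ∫⁻ x in Icc (0:ℝ) 1, ENNReal.ofReal (c * |D n x|) :=
      lintegral_mono_ae (hlt.mono fun x h => h.le)
    have hfi : ∫⁻ x in Icc (0:ℝ) 1, ENNReal.ofReal |g' n x| ≠ ∞ :=
      ne_top_of_le_ne_top (by
        rw [← lt_top_iff_ne_top]
        exact lt_of_le_of_lt (hHle n) ENNReal.one_lt_top) hle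
    exact lintegral_strict_mono hμne
      (((continuous_abs.measurable.comp_aemeasurable (hDmeas n)).const_mul c).ennreal_ofReal) hfi hlt
  -- conclude
  have hone : (Finset.univ : Finset (Fin N)).Nonempty := ⟨⟨0, by omega⟩, Finset.mem_univ _⟩
  have hsumlt : ∑ n : Fin N, ∫⁻ x in Icc (0:ℝ) 1, ENNReal.ofReal |g' n x| <
      ∑ n : Fin N, ∫⁻ x in Icc (0:ℝ) 1, ENNReal.ofReal (c * |D n x|) :=
    ENNReal.sum_lt_sum_of_nonempty hone (fun n _ => hstrict n)
  have hsumle : ∑ n : Fin N, ∫⁻ x in Icc (0:ℝ) 1, ENNReal.ofReal (c * |D n x|) ≤ 1 := by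
    calc ∑ n : Fin N, ∫⁻ x in Icc (0:ℝ) 1, ENNReal.ofReal (c * |D n x|)
        = ∑ n : Fin N, ENNReal.ofReal c * ∫⁻ x in Icc (0:ℝ) 1, ENNReal.ofReal |D n x| :=
          Finset.sum_congr rfl (fun n _ => hHeq n)
      _ = ENNReal.ofReal c * ∑ n : Fin N, ∫⁻ x in Icc (0:ℝ) 1, ENNReal.ofReal |D n x| :=
          (Finset.mul_sum _ _ _).symm
      _ ≤ ENNReal.ofReal c * ((K : ℝ≥0∞) * (L : ℝ≥0∞)) := mul_le_mul_right hTfin _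
      _ = 1 := by
          rw [show (K : ℝ≥0∞) * (L : ℝ≥0∞) = ENNReal.ofReal ((K:ℝ)*(L:ℝ)) by
            rw [ENNReal.ofReal_mul (by positivity), ENNReal.ofReal_natCast,
              ENNReal.ofReal_natCast]]
          rw [← ENNReal.ofReal_mul hcpos.le, hc]
          rw [show 1 / ((K:ℝ)*(L:ℝ)) * ((K:ℝ)*(L:ℝ)) = 1 by field_simp]
          exact ENNReal.ofReal_one
  have htotal : ∑ n : Fin N, ∫⁻ x in Icc (0:ℝ) 1, ENNReal.ofReal |g' n x| < 1 :=
    lt_of_lt_of_le hsumlt hsumle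
  -- translate to Bochner integrals
  have hint : ∀ n : Fin N, ∫ x in Icc (0:ℝ) 1, |g' n x| =
      (∫⁻ x in Icc (0:ℝ) 1, ENNReal.ofReal |g' n x|).toReal := by
    intro n
    rw [integral_eq_lintegral_of_nonneg_ae (ae_of_all _ fun x => abs_nonneg _)
      ((hgmeas n).abs.aestronglyMeasurable)]
  have hfinn : ∀ n : Fin N, ∫⁻ x in Icc (0:ℝ) 1, ENNReal.ofReal |g' n x| ≠ ∞ :=
    fun n => ne_top_of_le_ne_top ENNReal.one_ne_top
      (le_trans (Finset.single_le_sum (f := fun m : Fin N => ∫⁻ x in Icc (0:ℝ) 1, ENNReal.ofReal |g' m x|) (fun m _ => zero_le) (Finset.mem_univ n)) htotal.le)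
  calc ∑ n : Fin N, ∫ x in Icc (0:ℝ) 1, |g' n x|
      = ∑ n : Fin N, (∫⁻ x in Icc (0:ℝ) 1, ENNReal.ofReal |g' n x|).toReal :=
        Finset.sum_congr rfl (fun n _ => hint n)
    _ = (∑ n : Fin N, ∫⁻ x in Icc (0:ℝ) 1, ENNReal.ofReal |g' n x|).toReal :=
        (ENNReal.toReal_sum (fun n _ => hfinn n)).symm
    _ < 1 := by
        have h1 := (ENNReal.toReal_lt_toReal (ne_top_of_lt htotal) ENNReal.one_ne_top).mpr htotal
        simpa using h1
end

section
/- Let ε ∈ (0,1/2). Then the constant function 1/ε is, up to equality almost everywhere, the unique φ ∈ L¹([0,1]) satisfying φ(x) = ((1−ε)/2)·φ(x/2) + ((1−ε)/2)·φ((x+1)/2) + 1 for almost every x ∈ [0,1]. -/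
open MeasureTheory Filter Set Topology

/-- The constant function with value `c`, as an element of `L¹([0,1])`. -/
noncomputable def constL1 (c : ℝ) : Lp ℝ 1 μ01 :=
  (MeasureTheory.memLp_const c).toLp fun _ : ℝ => c

lemma volume_preimage_half (t : Set ℝ) :
    MeasureTheory.volume ((fun x : ℝ => x / 2) ⁻¹' t) = 2 * MeasureTheory.volume t := by
  have : (fun x : ℝ => x / 2) = (· * (2:ℝ)⁻¹) := by funext x; ring
  rw [this, Real.volume_preimage_mul_right (by norm_num)]
  norm_num

lemma map_half_restrict (a b : ℝ) :
    Measure.map (fun x : ℝ => x / 2) (MeasureTheory.volume.restrict (Icc a b)) =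
      (2 : ENNReal) • MeasureTheory.volume.restrict (Icc (a/2) (b/2)) := by
  ext s hs
  rw [Measure.map_apply (by fun_prop) hs,
    Measure.restrict_apply ((by fun_prop : Measurable fun x : ℝ => x / 2) hs),
    Measure.smul_apply, Measure.restrict_apply hs, smul_eq_mul]
  have hset : (fun x : ℝ => x / 2) ⁻¹' s ∩ Icc a b
      = (fun x : ℝ => x / 2) ⁻¹' (s ∩ Icc (a/2) (b/2)) := by
    ext x
    simp only [mem_inter_iff, mem_preimage, mem_Icc]
    constructor
    · rintro ⟨h1, h2, h3⟩; exact ⟨h1, by linarith, by linarith⟩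
    · rintro ⟨h1, h2, h3⟩; exact ⟨h1, by linarith, by linarith⟩
  rw [hset, volume_preimage_half]

lemma map_add_one_restrict (a b : ℝ) :
    Measure.map (fun x : ℝ => x + 1) (MeasureTheory.volume.restrict (Icc a b)) =
      MeasureTheory.volume.restrict (Icc (a+1) (b+1)) := by
  ext s hs
  rw [Measure.map_apply (by fun_prop) hs,
    Measure.restrict_apply ((by fun_prop : Measurable fun x : ℝ => x + 1) hs),
    Measure.restrict_apply hs]
  have hset : (fun x : ℝ => x + 1) ⁻¹' s ∩ Icc a b
      = (fun x : ℝ => x + 1) ⁻¹' (s ∩ Icc (a+1) (b+1)) := by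
    ext x
    simp only [mem_inter_iff, mem_preimage, mem_Icc]
    constructor
    · rintro ⟨h1, h2, h3⟩; exact ⟨h1, by linarith, by linarith⟩
    · rintro ⟨h1, h2, h3⟩; exact ⟨h1, by linarith, by linarith⟩
  rw [hset]
  have : (fun x : ℝ => x + 1) = (· + (1:ℝ)) := rfl
  rw [this, measure_preimage_add_right]

lemma map_m0 : Measure.map (fun x : ℝ => x / 2) μ01
    = (2 : ENNReal) • MeasureTheory.volume.restrict (Icc 0 (1/2 : ℝ)) := by
  have := map_half_restrict 0 1
  simpa using this

lemma map_m1 : Measure.map (fun x : ℝ => (x + 1) / 2) μ01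
    = (2 : ENNReal) • MeasureTheory.volume.restrict (Icc (1/2 : ℝ) 1) := by
  have hcomp : (fun x : ℝ => (x + 1) / 2) = (fun x : ℝ => x / 2) ∘ (fun x : ℝ => x + 1) := rfl
  rw [hcomp, ← Measure.map_map (by fun_prop) (by fun_prop), map_add_one_restrict,
    map_half_restrict]
  congr 1
  norm_num

lemma qmp_m0 : Measure.QuasiMeasurePreserving (fun x : ℝ => x / 2) μ01 μ01 := by
  refine ⟨by fun_prop, ?_⟩
  rw [map_m0]
  refine Measure.absolutelyContinuous_of_le_smul (c := 2) ?_
  intro t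
  simp only [Measure.smul_apply, smul_eq_mul]
  exact mul_le_mul_right (Measure.restrict_mono (Icc_subset_Icc le_rfl (by norm_num)) le_rfl t) 2

lemma qmp_m1 : Measure.QuasiMeasurePreserving (fun x : ℝ => (x + 1) / 2) μ01 μ01 := by
  refine ⟨by fun_prop, ?_⟩
  rw [map_m1]
  refine Measure.absolutelyContinuous_of_le_smul (c := 2) ?_
  intro t
  simp only [Measure.smul_apply, smul_eq_mul]
  exact mul_le_mul_right (Measure.restrict_mono (Icc_subset_Icc (by norm_num) le_rfl) le_rfl t) 2

lemma restrict_split :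
    μ01 = MeasureTheory.volume.restrict (Icc (0:ℝ) (1/2))
      + MeasureTheory.volume.restrict (Ioc (1/2 : ℝ) 1) := by
  rw [← Measure.restrict_union (by
      rw [Set.disjoint_left]; rintro x ⟨-, h2⟩ ⟨h3, -⟩; exact absurd h3 (not_lt.2 h2))
    measurableSet_Ioc]
  have hset : Icc (0:ℝ) 1 = Icc (0:ℝ) (1/2) ∪ Ioc (1/2 : ℝ) 1 := by
    ext x
    simp only [mem_Icc, mem_union, mem_Ioc]
    constructor
    · rintro ⟨h1, h2⟩; by_cases h : x ≤ 1/2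
      · exact Or.inl ⟨h1, h⟩
      · exact Or.inr ⟨by linarith [not_le.1 h], h2⟩
    · rintro (⟨h1, h2⟩ | ⟨h1, h2⟩) <;> exact ⟨by linarith, by linarith⟩
  rw [show μ01 = MeasureTheory.volume.restrict (Icc (0:ℝ) 1) from rfl, hset]

theorem stmt14 (ε : ℝ) (hε : ε ∈ Ioo (0 : ℝ) (1 / 2)) :
    ∀ φ : Lp ℝ 1 μ01,
      (∀ᵐ x ∂μ01, (φ : ℝ → ℝ) x =
          (1 - ε) / 2 * (φ : ℝ → ℝ) (x / 2) + (1 - ε) / 2 * (φ : ℝ → ℝ) ((x + 1) / 2) + 1) ↔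
        φ = constL1 (1 / ε) := by
  obtain ⟨hε0, hε2⟩ := hε
  have hεne : ε ≠ 0 := ne_of_gt hε0
  intro φ
  constructor
  · intro hae
    set g : ℝ → ℝ := (φ : ℝ → ℝ) with hgdef
    set c : ℝ := 1 / ε with hcdef
    have hg : MeasureTheory.Integrable g μ01 := L1.integrable_coeFn φ
    have hgm : AEMeasurable g μ01 := (Lp.aestronglyMeasurable φ).aemeasurable
    set F : ℝ → ENNReal := fun y => ENNReal.ofReal |g y - c| with hFdef
    have hFm : AEMeasurable F μ01 :=
      ((measurable_abs.comp_aemeasurable (hgm.sub aemeasurable_const))).ennreal_ofReal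
    have hF0 : AEMeasurable (fun x => F (x / 2)) μ01 :=
      (hFm.mono_ac qmp_m0.absolutelyContinuous).comp_aemeasurable qmp_m0.aemeasurable
    have hF1 : AEMeasurable (fun x => F ((x + 1) / 2)) μ01 :=
      (hFm.mono_ac qmp_m1.absolutelyContinuous).comp_aemeasurable qmp_m1.aemeasurable
    set A : ENNReal := ∫⁻ y, F y ∂(MeasureTheory.volume.restrict (Icc (0:ℝ) (1/2))) with hA
    set B : ENNReal := ∫⁻ y, F y ∂(MeasureTheory.volume.restrict (Icc (1/2:ℝ) 1)) with hB
    set I : ENNReal := ∫⁻ y, F y ∂μ01 with hI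
    have hI0 : ∫⁻ x, F (x / 2) ∂μ01 = 2 * A := by
      rw [hA, ← lintegral_map' (hFm.mono_ac qmp_m0.absolutelyContinuous) qmp_m0.aemeasurable,
        map_m0, lintegral_smul_measure, smul_eq_mul]
    have hI1 : ∫⁻ x, F ((x + 1) / 2) ∂μ01 = 2 * B := by
      rw [hB, ← lintegral_map' (hFm.mono_ac qmp_m1.absolutelyContinuous) qmp_m1.aemeasurable,
        map_m1, lintegral_smul_measure, smul_eq_mul]
    have hBIoc : B = ∫⁻ y, F y ∂(MeasureTheory.volume.restrict (Ioc (1/2:ℝ) 1)) := by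
      rw [hB, Measure.restrict_congr_set Ioc_ae_eq_Icc]
    have hsplit : A + B = I := by
      rw [hI, restrict_split, lintegral_add_measure, hBIoc, hA]
    have hIfin : I ≠ ⊤ := by
      have hint : MeasureTheory.Integrable (fun x => g x - c) μ01 :=
        hg.sub (integrable_const c)
      have heq : I = ∫⁻ x, ‖g x - c‖ₑ ∂μ01 :=
        lintegral_congr fun x => (Real.enorm_eq_ofReal_abs _).symm
      rw [heq]
      exact hint.hasFiniteIntegral.ne
    have hptwise : ∀ᵐ x ∂μ01,
        F x ≤ ENNReal.ofReal ((1 - ε) / 2) * (F (x / 2) + F ((x + 1) / 2)) := by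
      filter_upwards [hae] with x hx
      have h1 : g x - c = (1 - ε) / 2 * (g (x / 2) - c) + (1 - ε) / 2 * (g ((x + 1) / 2) - c) := by
        rw [hx, hcdef]; field_simp; ring
      have hnn : (0:ℝ) ≤ (1 - ε) / 2 := by linarith
      have h2 : |g x - c| ≤ (1 - ε) / 2 * (|g (x / 2) - c| + |g ((x + 1) / 2) - c|) := by
        rw [h1, mul_add]
        refine (abs_add_le _ _).trans ?_
        rw [abs_mul, abs_mul, abs_of_nonneg hnn]
      calc F x ≤ ENNReal.ofReal ((1 - ε) / 2 * (|g (x / 2) - c| + |g ((x + 1) / 2) - c|)) :=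
            ENNReal.ofReal_le_ofReal h2
        _ = _ := by
            rw [ENNReal.ofReal_mul hnn, ENNReal.ofReal_add (abs_nonneg _) (abs_nonneg _)]
    have hmain : I ≤ ENNReal.ofReal (1 - ε) * I := by
      calc I ≤ ∫⁻ x, ENNReal.ofReal ((1 - ε) / 2) * (F (x / 2) + F ((x + 1) / 2)) ∂μ01 :=
            lintegral_mono_ae hptwise
        _ = ENNReal.ofReal ((1 - ε) / 2) * ∫⁻ x, (F (x / 2) + F ((x + 1) / 2)) ∂μ01 :=
            lintegral_const_mul' _ _ ENNReal.ofReal_ne_top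
        _ = ENNReal.ofReal ((1 - ε) / 2) * ((∫⁻ x, F (x / 2) ∂μ01) + ∫⁻ x, F ((x + 1) / 2) ∂μ01) := by
            rw [lintegral_add_left' hF0]
        _ = ENNReal.ofReal ((1 - ε) / 2) * (2 * A + 2 * B) := by rw [hI0, hI1]
        _ = (ENNReal.ofReal ((1 - ε) / 2) * 2) * (A + B) := by ring
        _ = ENNReal.ofReal (1 - ε) * I := by
            rw [hsplit, show (2:ENNReal) = ENNReal.ofReal 2 by simp,
              ← ENNReal.ofReal_mul (by linarith : (0:ℝ) ≤ (1 - ε) / 2)]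
            norm_num
    have hIzero : I = 0 := by
      by_contra hne
      have hlt : ENNReal.ofReal (1 - ε) < 1 := ENNReal.ofReal_lt_one.2 (by linarith)
      have hlt2 : ENNReal.ofReal (1 - ε) * I < 1 * I :=
        ENNReal.mul_lt_mul_left hne hIfin hlt
      rw [one_mul] at hlt2
      exact lt_irrefl I (lt_of_le_of_lt hmain hlt2)
    have hgc : g =ᵐ[μ01] fun _ => c := by
      have hz := (lintegral_eq_zero_iff' hFm).1 hIzero
      filter_upwards [hz] with x hx
      have hx' : ENNReal.ofReal |g x - c| = 0 := by simpa [hFdef] using hx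
      have h0 : |g x - c| ≤ 0 := ENNReal.ofReal_eq_zero.1 hx'
      have := abs_eq_zero.1 (le_antisymm h0 (abs_nonneg _))
      linarith
    exact Lp.ext (hgc.trans (MemLp.coeFn_toLp (memLp_const c)).symm)
  · intro h
    have h0 : (constL1 (1/ε) : ℝ → ℝ) =ᵐ[μ01] fun _ => (1/ε : ℝ) := MemLp.coeFn_toLp (memLp_const (1/ε))
    have h0' : ∀ᵐ y ∂μ01, (constL1 (1/ε) : ℝ → ℝ) y = 1/ε := h0
    have h1 : ∀ᵐ x ∂μ01, (constL1 (1/ε) : ℝ → ℝ) (x / 2) = 1/ε :=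
      qmp_m0.ae (p := fun y => (constL1 (1/ε) : ℝ → ℝ) y = 1/ε) h0'
    have h2 : ∀ᵐ x ∂μ01, (constL1 (1/ε) : ℝ → ℝ) ((x + 1) / 2) = 1/ε :=
      qmp_m1.ae (p := fun y => (constL1 (1/ε) : ℝ → ℝ) y = 1/ε) h0' 
    rw [h]
    filter_upwards [h0, h1, h2] with x hx hx1 hx2
    rw [hx, hx1, hx2]
    field_simp
    ring
end

section
/- Consider the equation φ(x) = (1/2)·φ(x/2) + (1/2)·φ((x+1)/2) + b on [0,1]. If b ≠ 0, then this equation has no solution φ ∈ L¹([0,1]) (in the almost-everywhere sense). If b = 0, then every solution φ ∈ L¹([0,1]) of this equation is almost everywhere equal to a constant function, and conversely every constant function is a solution. -/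
open MeasureTheory Filter Set Topology

noncomputable def expE (n : ℤ) (x : ℝ) : ℂ :=
  Complex.exp (((-2 * Real.pi * n : ℝ) : ℂ) * Complex.I * (x : ℝ))

lemma expE_eq (n : ℤ) (x : ℝ) :
    expE n x = Complex.exp ((((-2 * Real.pi * n : ℝ) : ℂ) * Complex.I) * (x : ℝ)) := rfl

lemma expE_half (n : ℤ) (x : ℝ) : expE (2 * n) (x / 2) = expE n x := by
  unfold expE; congr 1; push_cast; ring

lemma expE_half' (n : ℤ) (x : ℝ) : expE (2 * n) ((x + 1) / 2) = expE n x := by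
  unfold expE
  have h : (((-2 * Real.pi * ((2 * n : ℤ) : ℝ) : ℝ)) : ℂ) * Complex.I * (((x + 1) / 2 : ℝ) : ℂ)
      = (((-2 * Real.pi * n : ℝ)) : ℂ) * Complex.I * (x : ℝ) + (-n : ℤ) * (2 * Real.pi * Complex.I) := by
    push_cast; ring
  rw [h, Complex.exp_add, Complex.exp_int_mul_two_pi_mul_I, mul_one]

lemma expE_zero (x : ℝ) : expE 0 x = 1 := by
  unfold expE; norm_num

/-- integral of expE over [0,1] -/
lemma integral_expE (n : ℤ) (hn : n ≠ 0) : (∫ x in (0:ℝ)..1, expE n x) = 0 := by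
  have hc : (((-2 * Real.pi * n : ℝ) : ℂ) * Complex.I) ≠ 0 := by
    apply mul_ne_zero _ Complex.I_ne_zero
    simp only [ne_eq, Complex.ofReal_eq_zero]
    have h1 := Real.pi_ne_zero
    have h2 : (n : ℝ) ≠ 0 := Int.cast_ne_zero.mpr hn
    intro h; apply h2
    field_simp at h
    simpa [h1] using h
  simp only [expE_eq]
  rw [integral_exp_mul_complex hc]
  rw [div_eq_zero_iff]
  left
  have : (((-2 * Real.pi * n : ℝ)) : ℂ) * Complex.I * ((1:ℝ):ℂ) = (-n : ℤ) * (2 * Real.pi * Complex.I) := by push_cast; ring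
  rw [this, Complex.exp_int_mul_two_pi_mul_I]
  simp

lemma qmp_affine (a c : ℝ) (ha : a ≠ 0)
    (hmaps : Set.MapsTo (fun x => a * x + c) (Set.Icc 0 1) (Set.Icc 0 1)) :
    MeasureTheory.Measure.QuasiMeasurePreserving (fun x => a * x + c) μ01 μ01 := by
  have hgm : Measurable (fun x : ℝ => a * x + c) := (measurable_id.const_mul a).add_const c
  refine ⟨hgm, ?_⟩
  have hmapvol : MeasureTheory.Measure.map (fun x : ℝ => a * x + c) volume
      = ENNReal.ofReal |a⁻¹| • volume := by
    have : (fun x : ℝ => a * x + c) = (fun x : ℝ => x + c) ∘ (fun x : ℝ => a * x) := by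
      funext x; simp
    rw [this, ← MeasureTheory.Measure.map_map (measurable_add_const c) (measurable_const_mul a),
      Real.map_volume_mul_left ha, MeasureTheory.Measure.map_smul,
      MeasureTheory.map_add_right_eq_self volume c]
  refine MeasureTheory.Measure.AbsolutelyContinuous.mk fun s hs h0 => ?_
  rw [MeasureTheory.Measure.map_apply hgm hs]
  rw [MeasureTheory.Measure.restrict_apply hs] at h0
  rw [MeasureTheory.Measure.restrict_apply (hgm hs)]
  obtain ⟨B, hB_sup, hBm, hB0⟩ := MeasureTheory.exists_measurable_superset_of_null h0
  have hsub : (fun x => a * x + c) ⁻¹' s ∩ Set.Icc 0 1 ⊆ (fun x => a * x + c) ⁻¹' B :=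
    fun x ⟨hxs, hxI⟩ => hB_sup ⟨hxs, hmaps hxI⟩
  refine measure_mono_null hsub ?_
  have : volume ((fun x => a * x + c) ⁻¹' B) = (MeasureTheory.Measure.map (fun x : ℝ => a * x + c) volume) B := by
    rw [MeasureTheory.Measure.map_apply hgm hBm]
  rw [this, hmapvol]
  simp [hB0]

lemma expE_continuous (n : ℤ) : Continuous (expE n) := by
  unfold expE
  exact Complex.continuous_exp.comp (by continuity)

noncomputable def cInt (f : ℝ → ℝ) (n : ℤ) : ℂ := ∫ x in (0:ℝ)..1, expE n x * f x

lemma hfC_II {f : ℝ → ℝ} (hf : MeasureTheory.IntegrableOn f (Set.Icc 0 1)) :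
    IntervalIntegrable (fun x => (f x : ℂ)) volume 0 1 := by
  rw [intervalIntegrable_iff_integrableOn_Ioc_of_le zero_le_one]
  exact (hf.mono_set Set.Ioc_subset_Icc_self).ofReal

lemma hG_II {f : ℝ → ℝ} (hf : MeasureTheory.IntegrableOn f (Set.Icc 0 1)) (n : ℤ) :
    IntervalIntegrable (fun x => expE n x * f x) volume 0 1 :=
  (hfC_II hf).continuousOn_mul (expE_continuous n).continuousOn

lemma uIcc01_sub_02 : Set.uIcc (0:ℝ) 1 ⊆ Set.uIcc (0:ℝ) 2 := by
  apply Set.uIcc_subset_uIcc <;> simp [Set.mem_uIcc] <;> norm_num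

lemma step1 (f : ℝ → ℝ) (hf : MeasureTheory.IntegrableOn f (Set.Icc 0 1)) {b : ℝ}
    (heq : ∀ᵐ x ∂μ01, f x = 1/2 * f (x/2) + 1/2 * f ((x+1)/2) + b) (n : ℤ) :
    cInt f n = cInt f (2*n) + b * ∫ x in (0:ℝ)..1, expE n x := by
  set G : ℝ → ℂ := fun u => expE (2*n) u * f u with hGdef
  have hG : IntervalIntegrable G volume 0 1 := hG_II hf (2*n)
  -- integrability of pieces
  have I1 : IntervalIntegrable (fun x => G (x/2)) volume 0 1 := by
    have := hG.comp_mul_right (c := 1/2)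
    norm_num at this
    have h2 : (fun x : ℝ => G (x * (1/2))) = fun x : ℝ => G (x/2) := by
      funext x; rw [mul_one_div]
    rw [h2] at this
    exact this.mono_set uIcc01_sub_02
  have I2 : IntervalIntegrable (fun x => G (x/2 + 1/2)) volume 0 1 := by
    have hK := hG.comp_add_right (1/2)
    have := hK.comp_mul_right (c := 1/2)
    norm_num at this
    have h2 : (fun x : ℝ => G (x * (1/2) + 1/2)) = fun x : ℝ => G (x/2 + 1/2) := by
      funext x; rw [mul_one_div]
    rw [h2] at this
    refine this.mono_set ?_
    apply Set.uIcc_subset_uIcc <;> simp [Set.mem_uIcc] <;> norm_num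
  have I3 : IntervalIntegrable (fun x => expE n x) volume 0 1 :=
    (expE_continuous n).intervalIntegrable 0 1
  -- rewrite using the functional equation
  have heq' : ∀ᵐ x ∂(volume : MeasureTheory.Measure ℝ), x ∈ Set.uIoc (0:ℝ) 1 →
      expE n x * f x = (1/2 : ℂ) * G (x/2) + (1/2 : ℂ) * G (x/2 + 1/2) + b * expE n x := by
    have h2 := MeasureTheory.ae_imp_of_ae_restrict heq
    filter_upwards [h2] with x hx hx2
    have hxIcc : x ∈ Set.Icc (0:ℝ) 1 := Set.Ioc_subset_Icc_self (by rwa [Set.uIoc_of_le zero_le_one] at hx2)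
    rw [hx hxIcc, hGdef]
    simp only [show ∀ y : ℝ, y/2 + 1/2 = (y+1)/2 from fun y => by ring]
    rw [expE_half, expE_half']
    push_cast
    ring
  have hsplit : cInt f n
      = ∫ x in (0:ℝ)..1, ((1/2 : ℂ) * G (x/2) + (1/2 : ℂ) * G (x/2 + 1/2) + b * expE n x) := by
    exact intervalIntegral.integral_congr_ae heq'
  rw [hsplit]
  rw [intervalIntegral.integral_add (((I1.const_mul _).add (I2.const_mul _))) (I3.const_mul _),
    intervalIntegral.integral_add (I1.const_mul _) (I2.const_mul _),
    intervalIntegral.integral_const_mul, intervalIntegral.integral_const_mul,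
    intervalIntegral.integral_const_mul]
  -- change of variables
  have hv1 : (∫ x in (0:ℝ)..1, G (x/2)) = (2:ℂ) * ∫ x in (0:ℝ)..(1/2), G x := by
    rw [intervalIntegral.integral_comp_div G (two_ne_zero)]
    norm_num [Complex.real_smul]
  have hv2 : (∫ x in (0:ℝ)..1, G (x/2 + 1/2)) = (2:ℂ) * ∫ x in (1/2:ℝ)..1, G x := by
    rw [intervalIntegral.integral_comp_div_add G (two_ne_zero) (1/2)]
    norm_num [Complex.real_smul]
  rw [hv1, hv2]
  have hadj : (∫ x in (0:ℝ)..(1/2), G x) + (∫ x in (1/2:ℝ)..1, G x) = ∫ x in (0:ℝ)..1, G x := by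
    apply intervalIntegral.integral_add_adjacent_intervals
    · refine hG.mono_set ?_
      apply Set.uIcc_subset_uIcc <;> simp [Set.mem_uIcc] <;> norm_num
    · refine hG.mono_set ?_
      apply Set.uIcc_subset_uIcc <;> simp [Set.mem_uIcc] <;> norm_num
  have : cInt f (2*n) = ∫ x in (0:ℝ)..1, G x := rfl
  rw [this, ← hadj]
  push_cast
  ring

lemma bzero (f : ℝ → ℝ) (hf : MeasureTheory.IntegrableOn f (Set.Icc 0 1)) {b : ℝ}
    (heq : ∀ᵐ x ∂μ01, f x = 1/2 * f (x/2) + 1/2 * f ((x+1)/2) + b) : b = 0 := by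
  have h := step1 f hf heq 0
  rw [mul_zero] at h
  have h1 : (∫ x in (0:ℝ)..1, expE 0 x) = 1 := by
    simp [expE_zero]
  rw [h1, mul_one] at h
  rw [left_eq_add] at h
  exact_mod_cast h

lemma cInt_pow_eq (f : ℝ → ℝ) (hf : MeasureTheory.IntegrableOn f (Set.Icc 0 1))
    (heq : ∀ᵐ x ∂μ01, f x = 1/2 * f (x/2) + 1/2 * f ((x+1)/2) + (0:ℝ)) (n : ℤ) (k : ℕ) :
    cInt f n = cInt f (2^k * n) := by
  induction k with
  | zero => simp
  | succ k ih =>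
    have h := step1 f hf heq (2^k * n)
    rw [Complex.ofReal_zero, zero_mul, add_zero] at h
    rw [ih, h]
    congr 1
    ring

lemma tendsto_cInt (f : ℝ → ℝ) (hm : Measurable f)
    (hf : MeasureTheory.IntegrableOn f (Set.Icc 0 1)) {n : ℤ} (hn : n ≠ 0) :
    Filter.Tendsto (fun k : ℕ => cInt f (2^k * n)) Filter.atTop (nhds 0) := by
  set g : ℝ → ℂ := (Set.Ioc (0:ℝ) 1).indicator (fun x => (f x : ℂ)) with hgdef
  have hFg : ∀ m : ℤ, FourierTransform.fourier g (m : ℝ) = cInt f m := by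
    intro m
    rw [Real.fourier_real_eq_integral_exp_smul]
    have hind : (fun v : ℝ => Complex.exp (((-2) * Real.pi * v * (m:ℝ) : ℝ) * Complex.I) • g v)
        = (Set.Ioc (0:ℝ) 1).indicator (fun v => expE m v * (f v : ℂ)) := by
      funext v
      by_cases hv : v ∈ Set.Ioc (0:ℝ) 1
      · simp only [hgdef, Set.indicator_of_mem hv, smul_eq_mul]
        congr 1
        unfold expE
        congr 1
        push_cast
        ring
      · simp [hgdef, Set.indicator_of_notMem hv]
    rw [hind, MeasureTheory.integral_indicator measurableSet_Ioc]
    rw [cInt, intervalIntegral.integral_of_le zero_le_one]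
  have htend : Filter.Tendsto (fun k : ℕ => ((2^k * n : ℤ) : ℝ)) Filter.atTop (Filter.cocompact ℝ) := by
    rw [cocompact_eq_atBot_atTop]
    have hpow : Filter.Tendsto (fun k : ℕ => (2:ℝ)^k) Filter.atTop Filter.atTop :=
      tendsto_pow_atTop_atTop_of_one_lt one_lt_two
    rcases hn.lt_or_gt with hneg | hpos
    · have h1 : Filter.Tendsto (fun k : ℕ => (2:ℝ)^k * (n:ℝ)) Filter.atTop Filter.atBot := by
        apply Filter.Tendsto.atTop_mul_const_of_neg _ hpow
        exact_mod_cast hneg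
      refine (h1.mono_right le_sup_left).congr fun k => ?_
      push_cast; ring
    · have h1 : Filter.Tendsto (fun k : ℕ => (2:ℝ)^k * (n:ℝ)) Filter.atTop Filter.atTop := by
        apply Filter.Tendsto.atTop_mul_const _ hpow
        exact_mod_cast hpos
      refine (h1.mono_right le_sup_right).congr fun k => ?_
      push_cast; ring
  have := (Real.zero_at_infty_fourier g).comp htend
  refine this.congr fun k => ?_
  exact hFg _

open AddCircle in
lemma circle_unique (F : AddCircle (1:ℝ) → ℂ)
    (hF : MeasureTheory.Integrable F (volume : MeasureTheory.Measure (AddCircle (1:ℝ))))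
    (hcoef : ∀ n : ℤ, (∫ x : AddCircle (1:ℝ), fourier n x * F x) = 0) :
    F =ᵐ[(volume : MeasureTheory.Measure (AddCircle (1:ℝ)))] 0 := by
  haveI : Fact ((0:ℝ) < 1) := ⟨one_pos⟩
  have hbdd : ∀ g : C(AddCircle (1:ℝ), ℂ),
      MeasureTheory.Integrable (fun x => g x * F x) volume :=
    fun g => hF.bdd_mul (c := ‖g‖) g.continuous.aestronglyMeasurable (ae_of_all _ fun x => g.norm_coe_le_norm x)
  have hnormint : MeasureTheory.Integrable (fun x => ‖F x‖) volume := hF.norm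
  have hcont0 : ∀ g : C(AddCircle (1:ℝ), ℂ), (∫ x, g x * F x) = 0 := by
    have hclosed : IsClosed {g : C(AddCircle (1:ℝ), ℂ) | (∫ x, g x * F x) = 0} := by
      have hlip : LipschitzWith ⟨∫ x, ‖F x‖, MeasureTheory.integral_nonneg fun x => norm_nonneg _⟩
          (fun g : C(AddCircle (1:ℝ), ℂ) => ∫ x, g x * F x) := by
        apply LipschitzWith.of_dist_le_mul
        intro g g'
        have hkey : ‖(∫ x, g x * F x) - ∫ x, g' x * F x‖ ≤ (∫ x, ‖F x‖) * ‖g - g'‖ := by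
          rw [← MeasureTheory.integral_sub (hbdd g) (hbdd g'), mul_comm]
          calc ‖∫ x, (g x * F x - g' x * F x)‖
            ≤ ∫ x, ‖g x * F x - g' x * F x‖ :=
              MeasureTheory.norm_integral_le_integral_norm _
          _ ≤ ∫ x, ‖g - g'‖ * ‖F x‖ := by
              apply MeasureTheory.integral_mono ((hbdd g).sub (hbdd g')).norm
                (hnormint.const_mul _)
              intro x
              simp only [Pi.sub_apply]
              have h3 : g x * F x - g' x * F x = (g x - g' x) * F x := by ring
              rw [h3, norm_mul]
              have hb : ‖g x - g' x‖ ≤ ‖g - g'‖ := by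
                simpa using (g - g').norm_coe_le_norm x
              exact mul_le_mul_of_nonneg_right hb (norm_nonneg _)
            _ = ‖g - g'‖ * ∫ x, ‖F x‖ := MeasureTheory.integral_const_mul _ _
        rw [dist_eq_norm, dist_eq_norm]; exact hkey
      have : {g : C(AddCircle (1:ℝ), ℂ) | (∫ x, g x * F x) = 0}
          = (fun g : C(AddCircle (1:ℝ), ℂ) => ∫ x, g x * F x) ⁻¹' {0} := rfl
      rw [this]
      exact IsClosed.preimage hlip.continuous isClosed_singleton
    have hspan : (Submodule.span ℂ (Set.range (@fourier 1)) : Set C(AddCircle (1:ℝ), ℂ))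
        ⊆ {g | (∫ x, g x * F x) = 0} := by
      intro g hg
      induction hg using Submodule.span_induction with
      | mem x hx =>
        obtain ⟨n, rfl⟩ := hx
        exact hcoef n
      | zero => simp
      | add x y hx hy ihx ihy =>
        simp only [Set.mem_setOf_eq] at ihx ihy ⊢
        have : (fun t => (x + y) t * F t) = fun t => x t * F t + y t * F t := by
          funext t; simp [add_mul]
        rw [this, MeasureTheory.integral_add (hbdd x) (hbdd y), ihx, ihy, add_zero]
      | smul a x hx ihx =>
        simp only [Set.mem_setOf_eq] at ihx ⊢
        have : (fun t => (a • x) t * F t) = fun t => a * (x t * F t) := by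
          funext t; simp [mul_assoc]
        rw [this, MeasureTheory.integral_const_mul, ihx, mul_zero]
    intro g
    have htop : g ∈ closure (Submodule.span ℂ (Set.range (@fourier 1)) : Set C(AddCircle (1:ℝ), ℂ)) := by
      have h1 := span_fourier_closure_eq_top (T := 1)
      have h2 : g ∈ (Submodule.span ℂ (Set.range (@fourier 1))).topologicalClosure := by
        rw [h1]; trivial
      exact h2
    have hmem := closure_mono hspan htop
    rwa [hclosed.closure_eq] at hmem
  -- zero integral on closed sets
  have hset : ∀ s : Set (AddCircle (1:ℝ)), IsClosed s → (∫ x in s, F x) = 0 := by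
    intro s hs
    rcases Set.eq_empty_or_nonempty s with rfl | hne
    · simp
    set gk : ℕ → AddCircle (1:ℝ) → ℝ := fun k x => max (1 - k * Metric.infDist x s) 0 with hgk
    have hgkc : ∀ k, Continuous (gk k) :=
      fun k => (continuous_const.sub ((continuous_const.mul (Metric.continuous_infDist_pt s)))).max
        continuous_const
    have hgk01 : ∀ k x, 0 ≤ gk k x ∧ gk k x ≤ 1 := by
      intro k x
      refine ⟨le_max_right _ _, ?_⟩
      apply max_le _ zero_le_one
      have : 0 ≤ (k:ℝ) * Metric.infDist x s :=
        mul_nonneg (Nat.cast_nonneg k) (Metric.infDist_nonneg)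
      linarith
    have hmeas : ∀ k, MeasureTheory.AEStronglyMeasurable (fun x => (gk k x : ℂ) * F x) volume :=
      fun k => (Complex.continuous_ofReal.comp (hgkc k)).aestronglyMeasurable.mul
        hF.aestronglyMeasurable
    have hbound : ∀ k, ∀ᵐ x ∂(volume : MeasureTheory.Measure (AddCircle (1:ℝ))),
        ‖(gk k x : ℂ) * F x‖ ≤ ‖F x‖ := by
      intro k
      filter_upwards with x
      rw [norm_mul, Complex.norm_real, Real.norm_eq_abs, _root_.abs_of_nonneg (hgk01 k x).1]
      nlinarith [(hgk01 k x).2, norm_nonneg (F x), (hgk01 k x).1]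
    have hlim : ∀ᵐ x ∂(volume : MeasureTheory.Measure (AddCircle (1:ℝ))),
        Filter.Tendsto (fun k => (gk k x : ℂ) * F x) Filter.atTop (nhds (s.indicator F x)) := by
      filter_upwards with x
      by_cases hx : x ∈ s
      · have : ∀ k, (gk k x : ℂ) * F x = F x := by
          intro k
          simp [hgk, Metric.infDist_zero_of_mem hx]
        rw [Set.indicator_of_mem hx]
        simp only [this]
        exact tendsto_const_nhds
      · have hpos : 0 < Metric.infDist x s := (hs.notMem_iff_infDist_pos hne).1 hx
        rw [Set.indicator_of_notMem hx]
        obtain ⟨N, hN⟩ := exists_nat_gt (1 / Metric.infDist x s)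
        have hev : ∀ k ≥ N, (gk k x : ℂ) * F x = 0 := by
          intro k hk
          have h1 : 1 / Metric.infDist x s < (k : ℝ) := lt_of_lt_of_le hN (by exact_mod_cast hk)
          have h2 : 1 < (k:ℝ) * Metric.infDist x s := by
            rw [div_lt_iff₀ hpos] at h1
            linarith
          have : gk k x = 0 := by
            simp only [hgk]
            rw [max_eq_right]
            linarith
          rw [this]
          simp
        apply Filter.Tendsto.congr' _ tendsto_const_nhds
        filter_upwards [Filter.eventually_ge_atTop N] with k hk
        exact (hev k hk).symm
    have htendsto := MeasureTheory.tendsto_integral_of_dominated_convergence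
      (fun x => ‖F x‖) hmeas hnormint hbound hlim
    have hzero : ∀ k, (∫ x, (gk k x : ℂ) * F x) = 0 :=
      fun k => hcont0 ⟨fun x => (gk k x : ℂ), Complex.continuous_ofReal.comp (hgkc k)⟩
    simp only [hzero] at htendsto
    have := tendsto_nhds_unique htendsto tendsto_const_nhds
    rwa [MeasureTheory.integral_indicator hs.measurableSet] at this
  exact MeasureTheory.ae_eq_zero_of_forall_setIntegral_isClosed_eq_zero hF hset

lemma cInt_eq_zero (f : ℝ → ℝ) (hm : Measurable f)
    (hf : MeasureTheory.IntegrableOn f (Set.Icc 0 1))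
    (heq : ∀ᵐ x ∂μ01, f x = 1/2 * f (x/2) + 1/2 * f ((x+1)/2) + (0:ℝ))
    {n : ℤ} (hn : n ≠ 0) : cInt f n = 0 := by
  refine tendsto_nhds_unique ?_ (tendsto_cInt f hm hf hn)
  exact tendsto_const_nhds.congr fun k => cInt_pow_eq f hf heq n k

open AddCircle in
lemma main_const (f : ℝ → ℝ) (hm : Measurable f)
    (hf : MeasureTheory.IntegrableOn f (Set.Icc 0 1))
    (heq : ∀ᵐ x ∂μ01, f x = 1/2 * f (x/2) + 1/2 * f ((x+1)/2) + (0:ℝ)) :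
    f =ᵐ[μ01] fun _ => (∫ x in (0:ℝ)..1, f x) := by
  haveI : Fact ((0:ℝ) < 1) := ⟨one_pos⟩
  set c₀ : ℝ := ∫ x in (0:ℝ)..1, f x with hc₀
  set h : ℝ → ℂ := fun x => (f x : ℂ) - (c₀ : ℂ) with hhdef
  have hhm : Measurable h := (Complex.measurable_ofReal.comp hm).sub measurable_const
  set F : AddCircle (1:ℝ) → ℂ := AddCircle.liftIoc 1 0 h with hFdef
  have hFm : Measurable F :=
    (hhm.comp measurable_subtype_coe).comp (AddCircle.measurableEquivIoc 1 0).measurable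
  have hcoe : ∀ x ∈ Set.Ioc (0:ℝ) 1, F (↑x) = h x := by
    intro x hx
    apply AddCircle.liftIoc_coe_apply
    rwa [zero_add]
  have hIoc_int : MeasureTheory.IntegrableOn h (Set.Ioc 0 1) volume := by
    apply MeasureTheory.Integrable.sub (hf.mono_set Set.Ioc_subset_Icc_self).ofReal
    exact (MeasureTheory.integrableOn_const_iff).mpr (Or.inr (by simp))
  have hFint : MeasureTheory.Integrable F (volume : MeasureTheory.Measure (AddCircle (1:ℝ))) := by
    rw [← (AddCircle.measurePreserving_mk 1 0).integrable_comp hFm.aestronglyMeasurable]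
    rw [zero_add]
    apply hIoc_int.congr
    filter_upwards [MeasureTheory.ae_restrict_mem measurableSet_Ioc] with x hx
    exact (hcoe x hx).symm
  have hcoeffs : ∀ n : ℤ, (∫ x : AddCircle (1:ℝ), fourier n x * F x) = 0 := by
    intro n
    rw [← AddCircle.intervalIntegral_preimage 1 0 (fun z => fourier n z * F z)]
    rw [zero_add]
    have hcongr : (∫ x in (0:ℝ)..1, fourier n (↑x : AddCircle (1:ℝ)) * F (↑x))
        = ∫ x in (0:ℝ)..1, expE (-n) x * h x := by
      apply intervalIntegral.integral_congr_ae
      filter_upwards with x hx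
      rw [Set.uIoc_of_le zero_le_one] at hx
      rw [hcoe x hx]
      congr 1
      rw [fourier_coe_apply]
      unfold expE
      congr 1
      push_cast
      ring
    rw [hcongr]
    have hsplit : (∫ x in (0:ℝ)..1, expE (-n) x * h x)
        = cInt f (-n) - (c₀ : ℂ) * ∫ x in (0:ℝ)..1, expE (-n) x := by
      have hpt : ∀ x : ℝ, expE (-n) x * h x
          = expE (-n) x * (f x : ℂ) - (c₀:ℂ) * expE (-n) x := by
        intro x; rw [hhdef]; ring
      simp_rw [hpt]
      rw [intervalIntegral.integral_sub (hG_II hf (-n))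
        (((expE_continuous (-n)).intervalIntegrable 0 1).const_mul _),
        intervalIntegral.integral_const_mul]
      rfl
    rw [hsplit]
    by_cases hn : n = 0
    · subst hn
      simp only [neg_zero]
      have h1 : cInt f 0 = (c₀ : ℂ) := by
        rw [cInt, hc₀]
        simp_rw [expE_zero, one_mul]
        rw [intervalIntegral.integral_ofReal]
      have h2 : (∫ x in (0:ℝ)..1, expE 0 x) = 1 := by simp [expE_zero]
      rw [h1, h2, mul_one, sub_self]
    · rw [cInt_eq_zero f hm hf heq (neg_ne_zero.mpr hn), integral_expE (-n) (neg_ne_zero.mpr hn),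
        mul_zero, sub_zero]
  have hae := circle_unique F hFint hcoeffs
  have hqmp := (AddCircle.measurePreserving_mk 1 0).quasiMeasurePreserving
  have hcomp := hqmp.ae_eq_comp hae
  have hh0 : h =ᵐ[volume.restrict (Set.Ioc (0:ℝ) 1)] 0 := by
    rw [show (0:ℝ) + 1 = 1 from by norm_num] at hcomp
    filter_upwards [hcomp, MeasureTheory.ae_restrict_mem measurableSet_Ioc] with x hx hmem
    rw [← hcoe x hmem]
    exact hx
  have hfinal : f =ᵐ[volume.restrict (Set.Ioc (0:ℝ) 1)] fun _ => c₀ := by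
    filter_upwards [hh0] with x hx
    have : (f x : ℂ) = (c₀ : ℂ) := by
      have := sub_eq_zero.mp hx
      exact this
    exact_mod_cast this
  have hμ : μ01 = volume.restrict (Set.Ioc (0:ℝ) 1) :=
    (MeasureTheory.Measure.restrict_congr_set MeasureTheory.Ioc_ae_eq_Icc).symm
  rw [hμ]
  exact hfinal

lemma maps1 : Set.MapsTo (fun x : ℝ => (1/2) * x + 0) (Set.Icc 0 1) (Set.Icc 0 1) := by
  intro x hx
  simp only [Set.mem_Icc] at hx ⊢
  constructor <;> linarith [hx.1, hx.2]

lemma maps2 : Set.MapsTo (fun x : ℝ => (1/2) * x + 1/2) (Set.Icc 0 1) (Set.Icc 0 1) := by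
  intro x hx
  simp only [Set.mem_Icc] at hx ⊢
  constructor <;> linarith [hx.1, hx.2]

theorem stmt18 (b : ℝ) :
    -- if b ≠ 0, the equation has no solution in L¹([0,1]) (in the a.e. sense)
    (b ≠ 0 →
      ¬∃ φ : Lp ℝ 1 μ01, ∀ᵐ x ∂μ01,
        (φ : ℝ → ℝ) x =
          1 / 2 * (φ : ℝ → ℝ) (x / 2) + 1 / 2 * (φ : ℝ → ℝ) ((x + 1) / 2) + b) ∧
    -- if b = 0, the solutions in L¹([0,1]) are exactly the (a.e.) constant functions
    (b = 0 → ∀ φ : Lp ℝ 1 μ01,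
      (∀ᵐ x ∂μ01, (φ : ℝ → ℝ) x =
          1 / 2 * (φ : ℝ → ℝ) (x / 2) + 1 / 2 * (φ : ℝ → ℝ) ((x + 1) / 2) + b) ↔
        ∃ c : ℝ, (φ : ℝ → ℝ) =ᵐ[μ01] fun _ => c) := by
  constructor
  · intro hb ⟨φ, hφ⟩
    have hint : MeasureTheory.Integrable (φ : ℝ → ℝ) μ01 := MeasureTheory.L1.integrable_coeFn φ
    exact hb (bzero (φ : ℝ → ℝ) hint hφ)
  · intro hb φ
    subst hb
    constructor
    · intro heq
      have hint : MeasureTheory.Integrable (φ : ℝ → ℝ) μ01 := MeasureTheory.L1.integrable_coeFn φ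
      have hm : Measurable (φ : ℝ → ℝ) := (MeasureTheory.Lp.stronglyMeasurable φ).measurable
      exact ⟨_, main_const (φ : ℝ → ℝ) hm hint heq⟩
    · rintro ⟨c, hc⟩
      have hg1 := qmp_affine (1/2) 0 (by norm_num) maps1
      have hg2 := qmp_affine (1/2) (1/2) (by norm_num) maps2
      have hc' : ∀ᵐ y ∂μ01, (φ : ℝ → ℝ) y = c := hc
      have h1 : ∀ᵐ x ∂μ01, (φ : ℝ → ℝ) ((1/2) * x + 0) = c :=
        hg1.ae (p := fun y => (φ : ℝ → ℝ) y = c) hc'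
      have h2 : ∀ᵐ x ∂μ01, (φ : ℝ → ℝ) ((1/2) * x + 1/2) = c :=
        hg2.ae (p := fun y => (φ : ℝ → ℝ) y = c) hc'
      filter_upwards [hc, h1, h2] with x hx h1x h2x
      have e1 : (φ : ℝ → ℝ) (x / 2) = c := by
        rw [show x / 2 = (1/2) * x + 0 by ring]; exact h1x
      have e2 : (φ : ℝ → ℝ) ((x + 1) / 2) = c := by
        rw [show (x + 1) / 2 = (1/2) * x + 1/2 by ring]; exact h2x
      rw [hx, e1, e2]
      ring
end
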